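/- For ≈_b-stable distributions μ and ν: μ ≈_b ν if and only if μ(S) = ν(S) for every equivalence class S of branching probabilistic bisimilarity on states. -/

import Mathlib

open scoped BigOperators
open Classical

namespace PBB

structure Distr (X : Type) where
  f : X → ℝ
  nonneg : ∀ x, 0 ≤ f x
  fin : (Function.support f).Finite
  sum_one : ∑ᶠ x, f x = 1

namespace Distr

variable {X : Type}

noncomputable def dirac (E : X) : Distr X where
  f := fun x => if x = E then 1 else 0
  nonneg := fun x => by by_cases h : x = E <;> simp [h]
  fin := Set.Finite.subset (Set.finite_singleton E) (by
    intro x hx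
    simp only [Function.mem_support] at hx
    by_contra h
    simp only [Set.mem_singleton_iff] at h
    simp [h] at hx)
  sum_one := by
    rw [finsum_eq_single _ E (by intro x hx; simp [hx])]
    simp

noncomputable def mix (r : ℝ) (h0 : 0 ≤ r) (h1 : r ≤ 1) (μ ν : Distr X) : Distr X where
  f := fun x => r * μ.f x + (1 - r) * ν.f x
  nonneg := fun x =>
    add_nonneg (mul_nonneg h0 (μ.nonneg x)) (mul_nonneg (by linarith) (ν.nonneg x))
  fin := Set.Finite.subset (μ.fin.union ν.fin) (by
    intro x hx
    simp only [Function.mem_support] at hx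
    by_contra h
    simp only [Set.mem_union, Function.mem_support, not_or, not_not] at h
    simp [h.1, h.2] at hx)
  sum_one := by
    have hf : (Function.support fun x => r * μ.f x).Finite :=
      Set.Finite.subset μ.fin (by
        intro x hx
        simp only [Function.mem_support] at hx ⊢
        intro h; simp [h] at hx)
    have hg : (Function.support fun x => (1 - r) * ν.f x).Finite :=
      Set.Finite.subset ν.fin (by
        intro x hx
        simp only [Function.mem_support] at hx ⊢
        intro h; simp [h] at hx)
    rw [finsum_add_distrib hf hg, ← mul_finsum _ _, ← mul_finsum _ _,
      μ.sum_one, ν.sum_one]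
    ring

end Distr

def IsMix {X : Type} (r : ℝ) (μ ν ξ : Distr X) : Prop :=
  ∀ x, ξ.f x = r * μ.f x + (1 - r) * ν.f x

def IsCombo {X I : Type} [Fintype I] (p : I → ℝ) (μs : I → Distr X) (ξ : Distr X) : Prop :=
  (∀ i, 0 ≤ p i) ∧ (∑ i, p i = 1) ∧ ∀ x, ξ.f x = ∑ i, p i * (μs i).f x

/-! ### The probabilistic process calculus -/

mutual
/-- Non-deterministic processes: `E ::= 0 | α.P | E + E`. -/
inductive PE (Act : Type) : Type where
  | zero : PE Act
  | pre : Act → PP Act → PE Act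
  | plus : PE Act → PE Act → PE Act

/-- Probabilistic processes: `P ::= ∂(E) | P ⊕_r P` with `r ∈ (0,1)`. -/
inductive PP (Act : Type) : Type where
  | dirac : PE Act → PP Act
  | pchoice : PP Act → (r : ℝ) → 0 < r → r < 1 → PP Act → PP Act
end

variable {Act : Type}

/-- The distribution `⟦P⟧` denoted by a probabilistic process. -/
noncomputable def den : PP Act → Distr (PE Act)
  | .dirac E => Distr.dirac E
  | .pchoice P r h0 h1 Q => Distr.mix r h0.le h1.le (den P) (den Q)

/-- The transition relation `E →α μ` on non-deterministic processes. -/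
inductive pstep : PE Act → Act → Distr (PE Act) → Prop where
  | pre (α : Act) (P : PP Act) : pstep (.pre α P) α (den P)
  | left {E₁ E₂ : PE Act} {α : Act} {μ : Distr (PE Act)} :
      pstep E₁ α μ → pstep (.plus E₁ E₂) α μ
  | right {E₁ E₂ : PE Act} {α : Act} {μ : Distr (PE Act)} :
      pstep E₂ α μ → pstep (.plus E₁ E₂) α μ

/-- The (combined) transition relation `μ →α μ'` on distributions. -/
def dstep (μ : Distr (PE Act)) (α : Act) (μ' : Distr (PE Act)) : Prop :=
  ∃ (I : Type) (_ : Fintype I) (p : I → ℝ) (Es : I → PE Act) (μs : I → Distr (PE Act)),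
    IsCombo p (fun i => Distr.dirac (Es i)) μ ∧ IsCombo p μs μ' ∧
    ∀ i, pstep (Es i) α (μs i)

variable (τ : Act)

/-- The partial silent step `μ →(τ) μ'`. -/
def ptau (μ μ' : Distr (PE Act)) : Prop :=
  dstep μ τ μ' ∨
  ∃ (s : ℝ) (μ₁ μ₂ μ₁' : Distr (PE Act)), 0 ≤ s ∧ s ≤ 1 ∧
    IsMix s μ₁ μ₂ μ ∧ IsMix s μ₁' μ₂ μ' ∧ dstep μ₁ τ μ₁'

/-- `μ ⟹ μ'`: the reflexive-transitive closure of `→(τ)`. -/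
def wtau : Distr (PE Act) → Distr (PE Act) → Prop :=
  Relation.ReflTransGen (ptau τ)

/-- The optional step `μ →(α) μ'`. -/
def optStep (μ : Distr (PE Act)) (α : Act) (μ' : Distr (PE Act)) : Prop :=
  dstep μ α μ' ∨ (α = τ ∧ ptau τ μ μ')

/-- Weak decomposability of a relation on distributions. -/
def WeaklyDecomposable (R : Distr (PE Act) → Distr (PE Act) → Prop) : Prop :=
  ∀ (I : Type) (_ : Fintype I) (p : I → ℝ) (μs : I → Distr (PE Act))
    (μ ν : Distr (PE Act)),
    R μ ν → IsCombo p μs μ →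
    ∃ (ν' : Distr (PE Act)) (νs : I → Distr (PE Act)),
      wtau τ ν ν' ∧ R μ ν' ∧ IsCombo p νs ν' ∧ ∀ i, R (μs i) (νs i)

/-- Decomposability of a relation on distributions. -/
def Decomposable (R : Distr (PE Act) → Distr (PE Act) → Prop) : Prop :=
  ∀ (I : Type) (_ : Fintype I) (p : I → ℝ) (μs : I → Distr (PE Act))
    (μ ν : Distr (PE Act)),
    R μ ν → IsCombo p μs μ →
    ∃ νs : I → Distr (PE Act), IsCombo p νs ν ∧ ∀ i, R (μs i) (νs i)

/-- Branching probabilistic bisimulation relations. -/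
def IsBranchingBisim (R : Distr (PE Act) → Distr (PE Act) → Prop) : Prop :=
  Symmetric R ∧ WeaklyDecomposable τ R ∧
  ∀ μ ν α μ', R μ ν → dstep μ α μ' →
    ∃ ν' ν'', wtau τ ν ν' ∧ optStep τ ν' α ν'' ∧ R μ ν' ∧ R μ' ν''

/-- Branching probabilistic bisimilarity `≈_b`. -/
def bb (μ ν : Distr (PE Act)) : Prop :=
  ∃ R, IsBranchingBisim τ R ∧ R μ ν

/-- Strong probabilistic bisimulation relations. -/
def IsStrongBisim (R : Distr (PE Act) → Distr (PE Act) → Prop) : Prop :=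
  Symmetric R ∧ Decomposable R ∧
  ∀ μ ν α μ', R μ ν → dstep μ α μ' →
    ∃ ν', dstep ν α ν' ∧ R μ' ν'

/-- Strong probabilistic bisimilarity `∼`. -/
def sb (μ ν : Distr (PE Act)) : Prop :=
  ∃ R, IsStrongBisim R ∧ R μ ν

/-- Rooted branching probabilistic bisimulation relations. -/
def IsRootedBranchingBisim (R : Distr (PE Act) → Distr (PE Act) → Prop) : Prop :=
  Symmetric R ∧ Decomposable R ∧
  ∀ μ ν α μ', R μ ν → dstep μ α μ' →
    ∃ ν', dstep ν α ν' ∧ bb τ μ' ν'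

/-- Rooted branching probabilistic bisimilarity `≈_rb`. -/
def rbb (μ ν : Distr (PE Act)) : Prop :=
  ∃ R, IsRootedBranchingBisim τ R ∧ R μ ν

/-- `≈_b`-stability of a distribution. -/
def Stable (μ : Distr (PE Act)) : Prop :=
  ∀ μ', wtau τ μ μ' → bb τ μ μ' → μ' = μ

/-- A state is rigid iff it admits no inert `τ`-transition. -/
def Rigid (E : PE Act) : Prop :=
  ¬ ∃ μ, pstep E τ μ ∧ bb τ (Distr.dirac E) μ

/-- `E ⊑ P`: every transition of `E` is matched by an optional transition of `⟦P⟧`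
with branching probabilistically bisimilar target. -/
def sq (E : PE Act) (P : PP Act) : Prop :=
  ∀ α μ, pstep E α μ → ∃ ν, optStep τ (den P) α ν ∧ bb τ μ ν



/-! ### Auxiliary development -/

section Aux

variable {X : Type}

theorem Distr.ext' {μ ν : Distr X} (h : ∀ x, μ.f x = ν.f x) : μ = ν := by
  cases μ; cases ν
  simp only [Distr.mk.injEq]
  funext x; exact h x

theorem Distr.mul_support_finite (c : ℝ) (μ : Distr X) :
    (Function.support fun x => c * μ.f x).Finite :=
  μ.fin.subset (by
    intro x hx
    simp only [Function.mem_support] at hx ⊢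
    intro h; simp [h] at hx)

theorem Distr.finsum_mul (c : ℝ) (μ : Distr X) : ∑ᶠ x, c * μ.f x = c := by
  rw [← mul_finsum _ _, μ.sum_one, mul_one]

theorem Distr.dirac_f (E x : X) : (Distr.dirac E).f x = if x = E then 1 else 0 := rfl

theorem Distr.f_nonneg_finsum_zero {f : X → ℝ} (hfin : (Function.support f).Finite)
    (h0 : ∀ x, 0 ≤ f x) (h : ∑ᶠ x, f x = 0) : ∀ x, f x = 0 := by
  intro x
  have h1 := single_le_finsum x hfin h0
  exact le_antisymm (h ▸ h1) (h0 x)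

theorem Distr.eq_dirac_of_f_eq_one {μ : Distr X} {E : X} (h : μ.f E = 1) :
    μ = Distr.dirac E := by
  have key : ∀ x, x ≠ E → μ.f x = 0 := by
    have hsplit : ∀ x, μ.f x = (if x = E then μ.f x else 0) + (if x = E then 0 else μ.f x) := by
      intro x; by_cases hx : x = E <;> simp [hx]
    have hf1 : (Function.support fun x => if x = E then μ.f x else 0).Finite := by
      apply Set.Finite.subset (Set.finite_singleton E)
      intro x hx
      simp only [Function.mem_support] at hx
      by_contra hxE
      simp only [Set.mem_singleton_iff] at hxE
      simp [hxE] at hx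
    have hf2 : (Function.support fun x => if x = E then 0 else μ.f x).Finite := by
      apply μ.fin.subset
      intro x hx
      simp only [Function.mem_support] at hx ⊢
      intro h0; simp [h0] at hx
    have hsum : (1 : ℝ) = 1 + ∑ᶠ x, (if x = E then 0 else μ.f x) := by
      calc (1 : ℝ) = ∑ᶠ x, μ.f x := μ.sum_one.symm
        _ = ∑ᶠ x, ((if x = E then μ.f x else 0) + (if x = E then 0 else μ.f x)) := by
            exact finsum_congr hsplit
        _ = (∑ᶠ x, (if x = E then μ.f x else 0)) + ∑ᶠ x, (if x = E then 0 else μ.f x) :=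
            finsum_add_distrib hf1 hf2
        _ = 1 + ∑ᶠ x, (if x = E then 0 else μ.f x) := by
            rw [finsum_eq_single _ E (by intro x hx; simp [hx])]
            simp [h]
    have hzero : ∑ᶠ x, (if x = E then 0 else μ.f x) = 0 := by linarith
    have := Distr.f_nonneg_finsum_zero hf2
      (by intro x; by_cases hx : x = E <;> simp [hx, μ.nonneg x]) hzero
    intro x hx
    have := this x
    simpa [hx] using this
  apply Distr.ext'
  intro x
  by_cases hx : x = E
  · subst hx; simp [Distr.dirac_f, h]
  · simp [Distr.dirac_f, hx, key x hx]

/-- Convex combination of finitely many distributions. -/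
noncomputable def comboD {I : Type} [Fintype I] (p : I → ℝ) (μs : I → Distr X)
    (h0 : ∀ i, 0 ≤ p i) (h1 : ∑ i, p i = 1) : Distr X where
  f := fun x => ∑ i, p i * (μs i).f x
  nonneg := fun x => Finset.sum_nonneg fun i _ => mul_nonneg (h0 i) ((μs i).nonneg x)
  fin := by
    apply Set.Finite.subset (Set.finite_iUnion fun i => (μs i).fin)
    intro x hx
    simp only [Function.mem_support] at hx
    by_contra h
    simp only [Set.mem_iUnion, Function.mem_support, not_exists, not_not] at h
    apply hx
    apply Finset.sum_eq_zero
    intro i _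
    rw [h i, mul_zero]
  sum_one := by
    rw [finsum_sum_comm _ _ (fun i _ => Distr.mul_support_finite (p i) (μs i))]
    calc ∑ i, ∑ᶠ x, p i * (μs i).f x = ∑ i, p i := by
          apply Finset.sum_congr rfl
          intro i _
          exact Distr.finsum_mul (p i) (μs i)
      _ = 1 := h1

theorem comboD_f {I : Type} [Fintype I] (p : I → ℝ) (μs : I → Distr X)
    (h0 : ∀ i, 0 ≤ p i) (h1 : ∑ i, p i = 1) (x : X) :
    (comboD p μs h0 h1).f x = ∑ i, p i * (μs i).f x := rfl

theorem isCombo_comboD {I : Type} [Fintype I] (p : I → ℝ) (μs : I → Distr X)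
    (h0 : ∀ i, 0 ≤ p i) (h1 : ∑ i, p i = 1) :
    IsCombo p μs (comboD p μs h0 h1) :=
  ⟨h0, h1, fun _ => rfl⟩

theorem IsCombo.term_le {I : Type} [Fintype I] {p : I → ℝ} {μs : I → Distr X} {μ : Distr X}
    (h : IsCombo p μs μ) (i : I) (x : X) : p i * (μs i).f x ≤ μ.f x := by
  rw [h.2.2 x]
  exact Finset.single_le_sum (fun j _ => mul_nonneg (h.1 j) ((μs j).nonneg x))
    (Finset.mem_univ i)

theorem IsCombo.unique {I : Type} [Fintype I] {p : I → ℝ} {μs : I → Distr X} {μ ν : Distr X}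
    (h : IsCombo p μs μ) (h' : IsCombo p μs ν) : μ = ν :=
  Distr.ext' fun x => by rw [h.2.2 x, h'.2.2 x]

/-- If two distributions agree pointwise, an `IsCombo` for one transfers to the other. -/
theorem IsCombo.congr {I : Type} [Fintype I] {p : I → ℝ} {μs : I → Distr X} {μ ν : Distr X}
    (h : IsCombo p μs μ) (hf : ∀ x, ν.f x = μ.f x) : IsCombo p μs ν :=
  ⟨h.1, h.2.1, fun x => (hf x).trans (h.2.2 x)⟩

end Aux


section Aux2

variable {X : Type}

/-- Evaluate a function against a combination of Dirac distributions. -/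
theorem dirac_combo_eval {I : Type} [Fintype I] {q : I → ℝ} {Es : I → X}
    {μ : Distr X} (hE : IsCombo q (fun j => Distr.dirac (Es j)) μ) (g : X → ℝ) :
    ∑ j, q j * g (Es j) = ∑ᶠ x, μ.f x * g x := by
  have h1 : ∀ x, μ.f x * g x = ∑ j, q j * (Distr.dirac (Es j)).f x * g x := by
    intro x; rw [hE.2.2 x, Finset.sum_mul]
  rw [finsum_congr h1, finsum_sum_comm _ _ ?fin]
  case fin =>
    intro j _
    apply Set.Finite.subset (Set.finite_singleton (Es j))
    intro x hx
    simp only [Function.mem_support] at hx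
    by_contra h
    simp only [Set.mem_singleton_iff] at h
    simp [Distr.dirac_f, h] at hx
  apply Finset.sum_congr rfl
  intro j _
  rw [finsum_eq_single _ (Es j) (by intro x hx; simp [Distr.dirac_f, hx])]
  simp [Distr.dirac_f]

theorem finsum_f_mul_support_finite (μ : Distr X) (g : X → ℝ) :
    (Function.support fun x => μ.f x * g x).Finite :=
  μ.fin.subset (by
    intro x hx
    simp only [Function.mem_support] at hx ⊢
    intro h; simp [h] at hx)

end Aux2

section Aux3

variable {Act : Type} (τ : Act)

theorem den_dirac (E : PE Act) : den (PP.dirac E) = Distr.dirac E := rfl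

theorem dirac_isCombo_single {X : Type} (x : X) :
    IsCombo (fun _ : PUnit => (1 : ℝ)) (fun _ : PUnit => Distr.dirac x) (Distr.dirac x) :=
  ⟨fun _ => one_pos.le, by simp, fun y => by simp⟩

/-- A single state with a transition gives a `dstep` from its Dirac distribution. -/
theorem dstep_dirac {E : PE Act} {α : Act} {κ : Distr (PE Act)} (h : pstep E α κ) :
    dstep (Distr.dirac E) α κ := by
  refine ⟨PUnit, inferInstance, fun _ => 1, fun _ => E, fun _ => κ, ?_, ?_, fun _ => h⟩
  · exact ⟨fun _ => one_pos.le, by simp, fun y => by simp⟩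
  · exact ⟨fun _ => one_pos.le, by simp, fun y => by simp⟩

/-- The global witness of a `τ`-dstep. -/
theorem dstep_witness :
    dstep (Distr.dirac (PE.pre τ (PP.dirac PE.zero))) τ (Distr.dirac PE.zero) := by
  have h : pstep (PE.pre τ (PP.dirac PE.zero)) τ (den (PP.dirac PE.zero)) :=
    pstep.pre τ (PP.dirac PE.zero)
  rw [den_dirac] at h
  exact dstep_dirac h

/-- `ptau` is reflexive (up to pointwise equality). -/
theorem ptau_refl' {μ μ' : Distr (PE Act)} (h : ∀ x, μ'.f x = μ.f x) : ptau τ μ μ' := by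
  refine Or.inr ⟨0, Distr.dirac (PE.pre τ (PP.dirac PE.zero)), μ,
    Distr.dirac PE.zero, le_refl 0, zero_le_one, ?_, ?_, dstep_witness τ⟩
  · intro x; ring
  · intro x; rw [h x]; ring

theorem ptau_refl (μ : Distr (PE Act)) : ptau τ μ μ := ptau_refl' τ (fun _ => rfl)

/-- Combining `dstep`s along a convex combination. -/
theorem dstep_combo {I : Type} [Fintype I] {p : I → ℝ} {κs σs : I → Distr (PE Act)}
    {ν ν' : Distr (PE Act)} {α : Act}
    (hκ : IsCombo p κs ν) (hσ : IsCombo p σs ν')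
    (hstep : ∀ i, p i ≠ 0 → dstep (κs i) α (σs i)) : dstep ν α ν' := by
  have key : ∀ i, ∃ (J : Type) (_ : Fintype J) (q : J → ℝ) (Es : J → PE Act)
      (μs : J → Distr (PE Act)),
      IsCombo q (fun j => Distr.dirac (Es j))
        (if p i = 0 then Distr.dirac (PE.pre α (PP.dirac PE.zero)) else κs i) ∧
      IsCombo q μs (if p i = 0 then Distr.dirac PE.zero else σs i) ∧
      ∀ j, pstep (Es j) α (μs j) := by
    intro i
    by_cases hi : p i = 0
    · refine ⟨PUnit, inferInstance, fun _ => 1, fun _ => PE.pre α (PP.dirac PE.zero),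
        fun _ => Distr.dirac PE.zero, ?_, ?_, ?_⟩
      · simp only [hi, if_pos]
        exact dirac_isCombo_single _
      · simp only [hi, if_pos]
        exact ⟨fun _ => one_pos.le, by simp, fun y => by simp⟩
      · intro _
        have h := pstep.pre α (PP.dirac PE.zero)
        rwa [den_dirac] at h
    · obtain ⟨J, hJ, q, Es, μs, h1, h2, h3⟩ := hstep i hi
      exact ⟨J, hJ, q, Es, μs, by simp only [hi, if_neg, if_false]; exact h1,
        by simp only [hi, if_neg, if_false]; exact h2, h3⟩
  choose J hJ q Es μs h1 h2 h3 using key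
  letI : ∀ i, Fintype (J i) := hJ
  have h1' : ∀ i, IsCombo (q i) (fun j => Distr.dirac (Es i j))
      (if p i = 0 then Distr.dirac (PE.pre α (PP.dirac PE.zero)) else κs i) := h1
  have h2' : ∀ i, IsCombo (q i) (μs i)
      (if p i = 0 then Distr.dirac PE.zero else σs i) := h2
  have hsum1 : ∑ x : Σ i, J i, p x.1 * q x.1 x.2 = 1 := by
    rw [← Finset.univ_sigma_univ, Finset.sum_sigma]
    dsimp only
    calc ∑ i, ∑ j, p i * q i j = ∑ i, p i * ∑ j, q i j := by
          apply Finset.sum_congr rfl; intro i _; rw [Finset.mul_sum]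
      _ = ∑ i, p i := by
          apply Finset.sum_congr rfl; intro i _; rw [(h1' i).2.1, mul_one]
      _ = 1 := hκ.2.1
  refine ⟨(Σ i, J i), inferInstance, fun x => p x.1 * q x.1 x.2,
    fun x => Es x.1 x.2, fun x => μs x.1 x.2, ?_, ?_, fun x => h3 x.1 x.2⟩
  · refine ⟨fun x => mul_nonneg (hκ.1 x.1) ((h1' x.1).1 x.2), hsum1, ?_⟩
    · intro x
      rw [hκ.2.2 x, ← Finset.univ_sigma_univ, Finset.sum_sigma]
      dsimp only
      apply Finset.sum_congr rfl
      intro i _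
      by_cases hi : p i = 0
      · simp [hi]
      · have := (h1' i).2.2 x
        simp only [hi, if_neg, if_false] at this
        rw [this, Finset.mul_sum]
        apply Finset.sum_congr rfl
        intro j _
        ring
  · refine ⟨fun x => mul_nonneg (hκ.1 x.1) ((h1' x.1).1 x.2), hsum1, ?_⟩
    · intro x
      rw [hσ.2.2 x, ← Finset.univ_sigma_univ, Finset.sum_sigma]
      dsimp only
      apply Finset.sum_congr rfl
      intro i _
      by_cases hi : p i = 0
      · simp [hi]
      · have := (h2' i).2.2 x
        simp only [hi, if_neg, if_false] at this
        rw [this, Finset.mul_sum]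
        apply Finset.sum_congr rfl
        intro j _
        ring

/-- Splitting a `dstep` along a convex decomposition of its source. -/
theorem dstep_split {I : Type} [Fintype I] {p : I → ℝ} {μs : I → Distr (PE Act)}
    {μ μ' : Distr (PE Act)} {α : Act}
    (hc : IsCombo p μs μ) (hd : dstep μ α μ') :
    ∃ μs' : I → Distr (PE Act), IsCombo p μs' μ' ∧
      ∀ i, p i ≠ 0 → dstep (μs i) α (μs' i) := by
  classical
  obtain ⟨J, hJ, q, Es, κs, hE, hκ, hps⟩ := hd
  letI : Fintype J := hJ
  -- basic facts
  have hqnn : ∀ j, 0 ≤ q j := hE.1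
  have hqle : ∀ j, q j ≤ μ.f (Es j) := by
    intro j
    have := hE.term_le j (Es j)
    simpa [Distr.dirac_f] using this
  have hzero : ∀ i, p i ≠ 0 → ∀ x, μ.f x = 0 → (μs i).f x = 0 := by
    intro i hi x hx
    have h1 := hc.term_le i x
    rw [hx] at h1
    have h2 : 0 < p i := lt_of_le_of_ne (hc.1 i) (Ne.symm hi)
    nlinarith [(μs i).nonneg x]
  have hq'nn : ∀ i j, 0 ≤ (μs i).f (Es j) * q j / μ.f (Es j) :=
    fun i j => div_nonneg (mul_nonneg ((μs i).nonneg _) (hqnn j)) (μ.nonneg _)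
  have hq'sum : ∀ i, p i ≠ 0 → ∑ j, (μs i).f (Es j) * q j / μ.f (Es j) = 1 := by
    intro i hi
    have step1 : ∀ j, (μs i).f (Es j) * q j / μ.f (Es j)
        = q j * ((μs i).f (Es j) / μ.f (Es j)) := by
      intro j; ring
    rw [Finset.sum_congr rfl (fun j _ => step1 j),
      dirac_combo_eval hE (fun x => (μs i).f x / μ.f x)]
    have step2 : ∀ x, μ.f x * ((μs i).f x / μ.f x) = (μs i).f x := by
      intro x
      by_cases hx : μ.f x = 0
      · rw [hx, hzero i hi x hx, zero_mul]
      · rw [mul_comm, div_mul_cancel₀ _ hx]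
    rw [finsum_congr step2, (μs i).sum_one]
  have hsrc : ∀ i, p i ≠ 0 →
      IsCombo (fun j => (μs i).f (Es j) * q j / μ.f (Es j))
        (fun j => Distr.dirac (Es j)) (μs i) := by
    intro i hi
    refine ⟨hq'nn i, hq'sum i hi, ?_⟩
    intro x
    by_cases hx : μ.f x = 0
    · rw [hzero i hi x hx]
      symm
      apply Finset.sum_eq_zero
      intro j _
      by_cases hxj : x = Es j
      · have hq0 : q j = 0 := by
          have h := hqle j
          rw [← hxj, hx] at h
          exact le_antisymm h (hqnn j)
        simp [hq0]
      · simp [Distr.dirac_f, hxj]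
    · have step : ∀ j, ((μs i).f (Es j) * q j / μ.f (Es j)) * (Distr.dirac (Es j)).f x
          = ((μs i).f x / μ.f x) * (q j * (Distr.dirac (Es j)).f x) := by
        intro j
        by_cases hxj : x = Es j
        · subst hxj; simp [Distr.dirac_f]; ring
        · simp [Distr.dirac_f, hxj]
      rw [Finset.sum_congr rfl (fun j _ => step j), ← Finset.mul_sum,
        ← hE.2.2 x, div_mul_cancel₀ _ hx]
  refine ⟨fun i => if h : p i = 0 then μs i
    else comboD (fun j => (μs i).f (Es j) * q j / μ.f (Es j)) κs (hq'nn i) (hq'sum i h),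
    ⟨hc.1, hc.2.1, ?_⟩, ?_⟩
  · intro x
    rw [hκ.2.2 x]
    have step : ∀ i, p i * (if h : p i = 0 then μs i
        else comboD (fun j => (μs i).f (Es j) * q j / μ.f (Es j)) κs
          (hq'nn i) (hq'sum i h)).f x
        = ∑ j, p i * ((μs i).f (Es j) * q j / μ.f (Es j)) * (κs j).f x := by
      intro i
      by_cases hi : p i = 0
      · simp only [hi, dif_pos, zero_mul]
        symm
        apply Finset.sum_eq_zero
        intro j _
        simp
      · rw [dif_neg hi, comboD_f, Finset.mul_sum]
        apply Finset.sum_congr rfl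
        intro j _
        ring
    rw [Finset.sum_congr rfl (fun i _ => step i), Finset.sum_comm]
    symm
    apply Finset.sum_congr rfl
    intro j _
    have hcol : ∑ i, p i * ((μs i).f (Es j) * q j / μ.f (Es j)) * (κs j).f x
        = (∑ i, p i * (μs i).f (Es j)) * (q j / μ.f (Es j)) * (κs j).f x := by
      rw [Finset.sum_mul, Finset.sum_mul]
      apply Finset.sum_congr rfl
      intro i _
      ring
    rw [hcol, ← hc.2.2 (Es j)]
    by_cases hj : μ.f (Es j) = 0
    · have : q j = 0 := le_antisymm (hj ▸ hqle j) (hqnn j)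
      simp [this]
    · have hmm : μ.f (Es j) * (q j / μ.f (Es j)) = q j := by
        field_simp
      rw [hmm]
  · intro i hi
    simp only [dif_neg hi]
    exact ⟨J, hJ, fun j => (μs i).f (Es j) * q j / μ.f (Es j), Es, κs,
      hsrc i hi, isCombo_comboD _ _ _ _, hps⟩

/-- Combining `ptau` steps along a convex combination. -/
theorem ptau_combo {I : Type} [Fintype I] {p : I → ℝ} {κs κs' : I → Distr (PE Act)}
    {μ μ' : Distr (PE Act)}
    (hκ : IsCombo p κs μ) (hκ' : IsCombo p κs' μ')
    (hstep : ∀ i, p i ≠ 0 → ptau τ (κs i) (κs' i)) : ptau τ μ μ' := by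
  classical
  have key : ∀ i, ∃ (s : ℝ) (a b a' : Distr (PE Act)), 0 ≤ s ∧ s ≤ 1 ∧
      IsMix s a b (if p i = 0 then Distr.dirac PE.zero else κs i) ∧
      IsMix s a' b (if p i = 0 then Distr.dirac PE.zero else κs' i) ∧
      dstep a τ a' := by
    intro i
    by_cases hi : p i = 0
    · refine ⟨0, Distr.dirac (PE.pre τ (PP.dirac PE.zero)), Distr.dirac PE.zero,
        Distr.dirac PE.zero, le_refl 0, zero_le_one, ?_, ?_, dstep_witness τ⟩
      · intro x; simp [hi]; try ring
      · intro x; simp [hi]; try ring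
    · rcases hstep i hi with hd | ⟨s, μ₁, μ₂, μ₁', h0, h1, hm, hm', hd⟩
      · refine ⟨1, κs i, Distr.dirac PE.zero, κs' i, zero_le_one, le_refl 1, ?_, ?_, hd⟩
        · intro x; simp [hi]; try ring
        · intro x; simp [hi]; try ring
      · exact ⟨s, μ₁, μ₂, μ₁', h0, h1, by simp [hi]; exact hm, by simp [hi]; exact hm', hd⟩
  choose s a b a' hs0 hs1 hm hm' hd using key
  have hκ2 : ∀ x, μ.f x = ∑ i, p i * (if p i = 0 then Distr.dirac PE.zero else κs i).f x := by
    intro x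
    rw [hκ.2.2 x]
    apply Finset.sum_congr rfl
    intro i _
    by_cases hi : p i = 0 <;> simp [hi]
  have hκ2' : ∀ x, μ'.f x = ∑ i, p i * (if p i = 0 then Distr.dirac PE.zero else κs' i).f x := by
    intro x
    rw [hκ'.2.2 x]
    apply Finset.sum_congr rfl
    intro i _
    by_cases hi : p i = 0 <;> simp [hi]
  have hexp : ∀ x, μ.f x = ∑ i, (p i * s i * (a i).f x + p i * (1 - s i) * (b i).f x) := by
    intro x
    rw [hκ2 x]
    apply Finset.sum_congr rfl
    intro i _
    rw [hm i x]
    ring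
  have hexp' : ∀ x, μ'.f x = ∑ i, (p i * s i * (a' i).f x + p i * (1 - s i) * (b i).f x) := by
    intro x
    rw [hκ2' x]
    apply Finset.sum_congr rfl
    intro i _
    rw [hm' i x]
    ring
  set S := ∑ i, p i * s i with hSdef
  have hS0 : 0 ≤ S := Finset.sum_nonneg fun i _ => mul_nonneg (hκ.1 i) (hs0 i)
  have hS1 : S ≤ 1 := by
    calc S ≤ ∑ i, p i := Finset.sum_le_sum (fun i _ => by nlinarith [hκ.1 i, hs1 i])
      _ = 1 := hκ.2.1
  have hsub : ∑ i, p i * (1 - s i) = 1 - S := by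
    have h : ∑ i, p i * (1 - s i) = (∑ i, p i) - ∑ i, p i * s i := by
      rw [← Finset.sum_sub_distrib]
      apply Finset.sum_congr rfl
      intro i _
      ring
    rw [h, hκ.2.1, hSdef]
  by_cases hS : S = 0
  · -- all moving weight is zero: μ' = μ pointwise
    have hz : ∀ i, p i * s i = 0 := by
      intro i
      have := (Finset.sum_eq_zero_iff_of_nonneg
        (fun i _ => mul_nonneg (hκ.1 i) (hs0 i))).1 (hSdef ▸ hS) i (Finset.mem_univ i)
      exact this
    apply ptau_refl' τ
    intro x
    rw [hexp x, hexp' x]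
    apply Finset.sum_congr rfl
    intro i _
    have h1 : p i * s i * (a i).f x = 0 := by rw [hz i]; ring
    have h2 : p i * s i * (a' i).f x = 0 := by rw [hz i]; ring
    rw [h1, h2]
  · have hSpos : 0 < S := lt_of_le_of_ne hS0 (Ne.symm hS)
    have hwnn : ∀ i, 0 ≤ p i * s i / S :=
      fun i => div_nonneg (mul_nonneg (hκ.1 i) (hs0 i)) hS0
    have hwsum : ∑ i, p i * s i / S = 1 := by
      rw [← Finset.sum_div, div_self hS]
    have hA := isCombo_comboD (fun i => p i * s i / S) a hwnn hwsum
    have hA' := isCombo_comboD (fun i => p i * s i / S) a' hwnn hwsum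
    have hdAA' : dstep (comboD (fun i => p i * s i / S) a hwnn hwsum) τ
        (comboD (fun i => p i * s i / S) a' hwnn hwsum) :=
      dstep_combo hA hA' (fun i _ => hd i)
    have hSmul : ∀ (c : I → Distr (PE Act)) (x : PE Act),
        S * (comboD (fun i => p i * s i / S) c hwnn hwsum).f x = ∑ i, p i * s i * (c i).f x := by
      intro c x
      rw [comboD_f, Finset.mul_sum]
      apply Finset.sum_congr rfl
      intro i _
      field_simp
    by_cases hS1' : S = 1
    · -- B is irrelevant
      have hz : ∀ i, p i * (1 - s i) = 0 := by
        intro i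
        have hsum0 : ∑ i, p i * (1 - s i) = 0 := by rw [hsub, hS1']; ring
        exact (Finset.sum_eq_zero_iff_of_nonneg
          (fun i _ => mul_nonneg (hκ.1 i) (by linarith [hs1 i]))).1 hsum0 i (Finset.mem_univ i)
      refine Or.inr ⟨S, comboD (fun i => p i * s i / S) a hwnn hwsum, Distr.dirac PE.zero,
        comboD (fun i => p i * s i / S) a' hwnn hwsum, hS0, hS1, ?_, ?_, hdAA'⟩
      · intro x
        rw [hexp x, hSmul a x]
        have : ∀ i, p i * s i * (a i).f x + p i * (1 - s i) * (b i).f x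
            = p i * s i * (a i).f x := by
          intro i
          rw [hz i]; ring
        rw [Finset.sum_congr rfl (fun i _ => this i), hS1']
        ring
      · intro x
        rw [hexp' x, hSmul a' x]
        have : ∀ i, p i * s i * (a' i).f x + p i * (1 - s i) * (b i).f x
            = p i * s i * (a' i).f x := by
          intro i
          rw [hz i]; ring
        rw [Finset.sum_congr rfl (fun i _ => this i), hS1']
        ring
    · have hS1pos : 0 < 1 - S := by
        rcases lt_or_eq_of_le hS1 with h | h
        · linarith
        · exact absurd h hS1'
      have hvnn : ∀ i, 0 ≤ p i * (1 - s i) / (1 - S) :=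
        fun i => div_nonneg (mul_nonneg (hκ.1 i) (by linarith [hs1 i])) hS1pos.le
      have hvsum : ∑ i, p i * (1 - s i) / (1 - S) = 1 := by
        rw [← Finset.sum_div, hsub, div_self (ne_of_gt hS1pos)]
      have hBmul : ∀ x, (1 - S) * (comboD (fun i => p i * (1 - s i) / (1 - S)) b hvnn hvsum).f x
          = ∑ i, p i * (1 - s i) * (b i).f x := by
        intro x
        rw [comboD_f, Finset.mul_sum]
        apply Finset.sum_congr rfl
        intro i _
        field_simp
      refine Or.inr ⟨S, comboD (fun i => p i * s i / S) a hwnn hwsum,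
        comboD (fun i => p i * (1 - s i) / (1 - S)) b hvnn hvsum,
        comboD (fun i => p i * s i / S) a' hwnn hwsum, hS0, hS1, ?_, ?_, hdAA'⟩
      · intro x
        rw [hexp x, hSmul a x, hBmul x, Finset.sum_add_distrib]
      · intro x
        rw [hexp' x, hSmul a' x, hBmul x, Finset.sum_add_distrib]

theorem comboD_congr {I : Type} [Fintype I] {p p' : I → ℝ} {μs μs' : I → Distr (PE Act)}
    {h0 h1 h0' h1'} (hp : ∀ i, p i = p' i) (hμ : ∀ i, p i ≠ 0 → μs i = μs' i) :
    comboD p μs h0 h1 = comboD p' μs' h0' h1' := by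
  apply Distr.ext'
  intro x
  rw [comboD_f, comboD_f]
  apply Finset.sum_congr rfl
  intro i _
  by_cases hi : p i = 0
  · rw [← hp i, hi, zero_mul, zero_mul]
  · rw [← hp i, hμ i hi]

/-- Lifting a weak step of one component through a convex combination. -/
theorem wtau_update {I : Type} [Fintype I] (p : I → ℝ) (h0 : ∀ i, 0 ≤ p i)
    (h1 : ∑ i, p i = 1) (cs : I → Distr (PE Act)) (i₀ : I)
    {κ' : Distr (PE Act)} (hw : wtau τ (cs i₀) κ') :
    wtau τ (comboD p cs h0 h1) (comboD p (Function.update cs i₀ κ') h0 h1) := by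
  classical
  induction hw with
  | refl =>
      rw [show Function.update cs i₀ (cs i₀) = cs from Function.update_eq_self i₀ cs]
      exact Relation.ReflTransGen.refl
  | tail hab hbc ih =>
      refine Relation.ReflTransGen.tail ih ?_
      apply ptau_combo τ (isCombo_comboD _ _ _ _) (isCombo_comboD _ _ _ _)
      intro i hpi
      by_cases h : i = i₀
      · subst h
        simp only [Function.update_self]
        exact hbc
      · simp only [Function.update_of_ne h]
        exact ptau_refl τ _

/-- Combining `wtau` steps along a convex combination. -/
theorem wtau_combo {I : Type} [Fintype I] {p : I → ℝ} {κs κs' : I → Distr (PE Act)}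
    {μ μ' : Distr (PE Act)}
    (hκ : IsCombo p κs μ) (hκ' : IsCombo p κs' μ')
    (hstep : ∀ i, p i ≠ 0 → wtau τ (κs i) (κs' i)) : wtau τ μ μ' := by
  classical
  have main : ∀ t : Finset I,
      wtau τ μ (comboD p (fun i => if i ∈ t then κs' i else κs i) hκ.1 hκ.2.1) := by
    intro t
    induction t using Finset.induction with
    | empty =>
        have he : comboD p (fun i => if i ∈ (∅ : Finset I) then κs' i else κs i) hκ.1 hκ.2.1
            = μ := by
          apply Distr.ext'
          intro x
          rw [comboD_f, hκ.2.2 x]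
          simp
        rw [he]
        exact Relation.ReflTransGen.refl
    | @insert a t hat ih =>
        refine Relation.ReflTransGen.trans ih ?_
        by_cases hpa : p a = 0
        · have he : comboD p (fun i => if i ∈ t then κs' i else κs i) hκ.1 hκ.2.1
              = comboD p (fun i => if i ∈ insert a t then κs' i else κs i) hκ.1 hκ.2.1 := by
            apply comboD_congr (fun _ => rfl)
            intro i hpi
            have hia : i ≠ a := fun h => hpi (h ▸ hpa)
            simp [Finset.mem_insert, hia]
          rw [← he]
        · have hupd : (fun i => if i ∈ insert a t then κs' i else κs i)
              = Function.update (fun i => if i ∈ t then κs' i else κs i) a (κs' a) := by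
            funext i
            by_cases h : i = a
            · subst h
              simp [Function.update_self]
            · simp [Function.update_of_ne h, Finset.mem_insert, h]
          have hend : wtau τ (comboD p (fun i => if i ∈ t then κs' i else κs i) hκ.1 hκ.2.1)
              (comboD p (Function.update (fun i => if i ∈ t then κs' i else κs i) a (κs' a))
                hκ.1 hκ.2.1) := by
            have ha' : κs' a = Function.update (fun i => if i ∈ t then κs' i else κs i) a (κs' a) a := by
              simp [Function.update_self]
            apply wtau_update τ p hκ.1 hκ.2.1 _ a
            have ha'' : (fun i => if i ∈ t then κs' i else κs i) a = κs a := by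
              simp [hat]
            rw [if_neg hat]
            exact hstep a hpa
          have hcomb : comboD p (fun i => if i ∈ insert a t then κs' i else κs i) hκ.1 hκ.2.1
              = comboD p (Function.update (fun i => if i ∈ t then κs' i else κs i) a (κs' a))
                hκ.1 hκ.2.1 := by
            apply comboD_congr (fun _ => rfl)
            intro i _
            exact congrFun hupd i
          rw [hcomb]
          exact hend
  have hu : comboD p (fun i => if i ∈ (Finset.univ : Finset I) then κs' i else κs i)
      hκ.1 hκ.2.1 = μ' := by
    apply Distr.ext'
    intro x
    rw [comboD_f, hκ'.2.2 x]
    simp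
  have := main Finset.univ
  rwa [hu] at this

/-- Combining optional steps along a convex combination. -/
theorem optStep_combo {I : Type} [Fintype I] {p : I → ℝ} {κs κs' : I → Distr (PE Act)}
    {μ μ' : Distr (PE Act)} {α : Act}
    (hκ : IsCombo p κs μ) (hκ' : IsCombo p κs' μ')
    (hstep : ∀ i, p i ≠ 0 → optStep τ (κs i) α (κs' i)) : optStep τ μ α μ' := by
  by_cases hα : α = τ
  · rw [hα] at hstep ⊢
    right
    refine ⟨rfl, ptau_combo τ hκ hκ' ?_⟩
    intro i hpi
    rcases hstep i hpi with hd | ⟨_, hp⟩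
    · exact Or.inl hd
    · exact hp
  · left
    apply dstep_combo hκ hκ'
    intro i hpi
    rcases hstep i hpi with hd | ⟨h, _⟩
    · exact hd
    · exact absurd h hα

theorem ptau_wtau {μ μ' : Distr (PE Act)} (h : ptau τ μ μ') : wtau τ μ μ' :=
  Relation.ReflTransGen.single h

theorem optStep_tau_wtau {μ μ' : Distr (PE Act)} (h : optStep τ μ τ μ') : wtau τ μ μ' := by
  rcases h with hd | ⟨_, hp⟩
  · exact Relation.ReflTransGen.single (Or.inl hd)
  · exact Relation.ReflTransGen.single hp

theorem optStep_ptau {μ μ' : Distr (PE Act)} (h : optStep τ μ τ μ') : ptau τ μ μ' := by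
  rcases h with hd | ⟨_, hp⟩
  · exact Or.inl hd
  · exact hp

/-- `≈_b` is itself a branching probabilistic bisimulation. -/
theorem bb_isBisim : IsBranchingBisim τ (bb τ) := by
  refine ⟨?_, ?_, ?_⟩
  · rintro μ ν ⟨R, hR, hμν⟩
    exact ⟨R, hR, hR.1 hμν⟩
  · rintro I fI p μs μ ν ⟨R, hR, hμν⟩ hc
    obtain ⟨ν', νs, h1, h2, h3, h4⟩ := hR.2.1 I fI p μs μ ν hμν hc
    exact ⟨ν', νs, h1, ⟨R, hR, h2⟩, h3, fun i => ⟨R, hR, h4 i⟩⟩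
  · rintro μ ν α μ' ⟨R, hR, hμν⟩ hd
    obtain ⟨ν', ν'', h1, h2, h3, h4⟩ := hR.2.2 μ ν α μ' hμν hd
    exact ⟨ν', ν'', h1, h2, ⟨R, hR, h3⟩, ⟨R, hR, h4⟩⟩

theorem bb_refl (μ : Distr (PE Act)) : bb τ μ μ := by
  refine ⟨Eq, ⟨fun a b h => h.symm, ?_, ?_⟩, rfl⟩
  · rintro I fI p μs μ₀ ν₀ rfl hc
    exact ⟨μ₀, μs, Relation.ReflTransGen.refl, rfl, hc, fun i => rfl⟩
  · rintro μ₀ ν₀ α μ₀' rfl hd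
    exact ⟨μ₀, μ₀', Relation.ReflTransGen.refl, Or.inl hd, rfl, rfl⟩

theorem bb_symm {μ ν : Distr (PE Act)} (h : bb τ μ ν) : bb τ ν μ :=
  (bb_isBisim τ).1 h

/-- The convex-combination closure of `≈_b`. -/
def Rhat (μ ν : Distr (PE Act)) : Prop :=
  ∃ (I : Type) (_ : Fintype I) (p : I → ℝ) (μs νs : I → Distr (PE Act)),
    IsCombo p μs μ ∧ IsCombo p νs ν ∧ ∀ i, p i ≠ 0 → bb τ (μs i) (νs i)

theorem Rhat_refl (μ : Distr (PE Act)) : Rhat τ μ μ :=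
  ⟨PUnit, inferInstance, fun _ => 1, fun _ => μ, fun _ => μ,
    ⟨fun _ => one_pos.le, by simp, fun x => by simp⟩,
    ⟨fun _ => one_pos.le, by simp, fun x => by simp⟩,
    fun _ _ => bb_refl τ μ⟩

/-- Common refinement of two convex decompositions of the same distribution. -/
theorem common_refinement {I J : Type} [Fintype I] [Fintype J]
    {p : I → ℝ} {μs : I → Distr (PE Act)} {q : J → ℝ} {ξs : J → Distr (PE Act)}
    {μ : Distr (PE Act)}
    (hp : IsCombo p μs μ) (hq : IsCombo q ξs μ) :
    ∃ (r : I → J → ℝ) (χ : I → J → Distr (PE Act)),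
      (∀ i j, 0 ≤ r i j) ∧
      (∀ i, ∑ j, r i j = p i) ∧
      (∀ j, ∑ i, r i j = q j) ∧
      (∀ i x, ∑ j, r i j * (χ i j).f x = p i * (μs i).f x) ∧
      (∀ j x, ∑ i, r i j * (χ i j).f x = q j * (ξs j).f x) := by
  classical
  set g : I → J → PE Act → ℝ :=
    fun i j x => p i * (μs i).f x * (q j * (ξs j).f x) / μ.f x with hgdef
  have hgnn : ∀ i j x, 0 ≤ g i j x := by
    intro i j x
    apply div_nonneg _ (μ.nonneg x)
    have := (μs i).nonneg x
    have := (ξs j).nonneg x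
    have := hp.1 i
    have := hq.1 j
    positivity
  have hgfin : ∀ i j, (Function.support (g i j)).Finite := by
    intro i j
    apply (μs i).fin.subset
    intro x hx
    simp only [Function.mem_support] at hx ⊢
    intro h
    apply hx
    simp [hgdef, h]
  have hμzero : ∀ x, μ.f x = 0 → ∀ i, p i * (μs i).f x = 0 := by
    intro x hx i
    have h1 := hp.term_le i x
    rw [hx] at h1
    have h2 : 0 ≤ p i * (μs i).f x := mul_nonneg (hp.1 i) ((μs i).nonneg x)
    linarith
  have hξzero : ∀ x, μ.f x = 0 → ∀ j, q j * (ξs j).f x = 0 := by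
    intro x hx j
    have h1 := hq.term_le j x
    rw [hx] at h1
    have h2 : 0 ≤ q j * (ξs j).f x := mul_nonneg (hq.1 j) ((ξs j).nonneg x)
    linarith
  -- pointwise row and column sums of g
  have hgrow : ∀ i x, ∑ j, g i j x = p i * (μs i).f x := by
    intro i x
    by_cases hx : μ.f x = 0
    · rw [hμzero x hx i]
      apply Finset.sum_eq_zero
      intro j _
      simp [hgdef, hx]
    · have : ∀ j, g i j x = (p i * (μs i).f x / μ.f x) * (q j * (ξs j).f x) := by
        intro j
        simp only [hgdef]
        ring
      rw [Finset.sum_congr rfl (fun j _ => this j), ← Finset.mul_sum]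
      have hsq : ∑ j, q j * (ξs j).f x = μ.f x := (hq.2.2 x).symm
      rw [hsq, div_mul_cancel₀ _ hx]
  have hgcol : ∀ j x, ∑ i, g i j x = q j * (ξs j).f x := by
    intro j x
    by_cases hx : μ.f x = 0
    · rw [hξzero x hx j]
      apply Finset.sum_eq_zero
      intro i _
      simp [hgdef, hx]
    · have : ∀ i, g i j x = (q j * (ξs j).f x / μ.f x) * (p i * (μs i).f x) := by
        intro i
        simp only [hgdef]
        ring
      rw [Finset.sum_congr rfl (fun i _ => this i), ← Finset.mul_sum]
      have hsp : ∑ i, p i * (μs i).f x = μ.f x := (hp.2.2 x).symm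
      rw [hsp, div_mul_cancel₀ _ hx]
  set r : I → J → ℝ := fun i j => ∑ᶠ x, g i j x with hrdef
  have hrnn : ∀ i j, 0 ≤ r i j := fun i j => finsum_nonneg (hgnn i j)
  have hgzero : ∀ i j, r i j = 0 → ∀ x, g i j x = 0 :=
    fun i j h => Distr.f_nonneg_finsum_zero (hgfin i j) (hgnn i j) h
  -- the refined components
  have hχ : ∀ i j, r i j ≠ 0 → ∃ χ : Distr (PE Act), ∀ x, χ.f x = g i j x / r i j := by
    intro i j hr
    have hrpos : 0 < r i j := lt_of_le_of_ne (hrnn i j) (Ne.symm hr)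
    refine ⟨⟨fun x => g i j x / r i j, fun x => div_nonneg (hgnn i j x) (hrnn i j), ?_, ?_⟩,
      fun x => rfl⟩
    · apply (hgfin i j).subset
      intro x hx
      simp only [Function.mem_support] at hx ⊢
      intro h
      apply hx
      rw [h, zero_div]
    · have : ∀ x, g i j x / r i j = g i j x * (r i j)⁻¹ := fun x => div_eq_mul_inv _ _
      rw [finsum_congr this, ← finsum_mul _ _]
      have hr' : ∑ᶠ x, g i j x = r i j := rfl
      rw [hr']
      field_simp
  choose χ0 hχ0 using hχ
  refine ⟨r, fun i j => if h : r i j = 0 then Distr.dirac PE.zero else χ0 i j h,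
    hrnn, ?_, ?_, ?_, ?_⟩
  · intro i
    rw [hrdef]
    rw [← finsum_sum_comm _ _ (fun j _ => hgfin i j)]
    have : ∀ x, ∑ j, g i j x = p i * (μs i).f x := hgrow i
    rw [finsum_congr this]
    rw [← mul_finsum _ _, (μs i).sum_one, mul_one]
  · intro j
    rw [hrdef]
    rw [← finsum_sum_comm _ _ (fun i _ => hgfin i j)]
    have : ∀ x, ∑ i, g i j x = q j * (ξs j).f x := hgcol j
    rw [finsum_congr this]
    rw [← mul_finsum _ _, (ξs j).sum_one, mul_one]
  · intro i x
    rw [← hgrow i x]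
    apply Finset.sum_congr rfl
    intro j _
    by_cases h : r i j = 0
    · rw [h, zero_mul, hgzero i j h x]
    · simp only [dif_neg h]
      rw [hχ0 i j h x]
      field_simp
  · intro j x
    rw [← hgcol j x]
    apply Finset.sum_congr rfl
    intro i _
    by_cases h : r i j = 0
    · rw [h, zero_mul, hgzero i j h x]
    · simp only [dif_neg h]
      rw [hχ0 i j h x]
      field_simp

theorem Rhat_isBisim : IsBranchingBisim τ (Rhat τ) := by
  classical
  refine ⟨?_, ?_, ?_⟩
  · rintro μ ν ⟨I, fI, p, μs, νs, h1, h2, h3⟩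
    exact ⟨I, fI, p, νs, μs, h2, h1, fun i hi => bb_symm τ (h3 i hi)⟩
  · rintro J fJ q ξs μ ν ⟨I, fI, p, μs, νs, hpμ, hpν, hbb⟩ hq
    obtain ⟨r, χ, hrnn, hrow, hcol, hrowx, hcolx⟩ := common_refinement hpμ hq
    have hrp : ∀ i, p i = 0 → ∀ j, r i j = 0 := by
      intro i hi j
      exact (Finset.sum_eq_zero_iff_of_nonneg (fun j _ => hrnn i j)).1
        ((hrow i).trans hi) j (Finset.mem_univ j)
    have hrq : ∀ j, q j = 0 → ∀ i, r i j = 0 := by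
      intro j hj i
      exact (Finset.sum_eq_zero_iff_of_nonneg (fun i _ => hrnn i j)).1
        ((hcol j).trans hj) i (Finset.mem_univ i)
    have hsrc_row : ∀ i, p i ≠ 0 → IsCombo (fun j => r i j / p i) (χ i) (μs i) := by
      intro i hi
      refine ⟨fun j => div_nonneg (hrnn i j) (hpμ.1 i), ?_, ?_⟩
      · rw [← Finset.sum_div, hrow i, div_self hi]
      · intro x
        have : ∀ j, (r i j / p i) * (χ i j).f x = (r i j * (χ i j).f x) / p i := by
          intro j; ring
        rw [Finset.sum_congr rfl (fun j _ => this j), ← Finset.sum_div, hrowx i x,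
          mul_div_cancel_left₀ _ hi]
    have hsrc_col : ∀ j, q j ≠ 0 → IsCombo (fun i => r i j / q j) (fun i => χ i j) (ξs j) := by
      intro j hj
      refine ⟨fun i => div_nonneg (hrnn i j) (hq.1 j), ?_, ?_⟩
      · rw [← Finset.sum_div, hcol j, div_self hj]
      · intro x
        have : ∀ i, (r i j / q j) * (χ i j).f x = (r i j * (χ i j).f x) / q j := by
          intro i; ring
        rw [Finset.sum_congr rfl (fun i _ => this i), ← Finset.sum_div, hcolx j x,
          mul_div_cancel_left₀ _ hj]
    have key : ∀ i, ∃ (ν' : Distr (PE Act)) (ω : J → Distr (PE Act)),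
        wtau τ (νs i) ν' ∧
        (p i ≠ 0 → bb τ (μs i) ν' ∧ IsCombo (fun j => r i j / p i) ω ν' ∧
          ∀ j, bb τ (χ i j) (ω j)) := by
      intro i
      by_cases hi : p i = 0
      · exact ⟨νs i, fun _ => νs i, Relation.ReflTransGen.refl, fun h => absurd hi h⟩
      · obtain ⟨ν', ωs, h1, h2, h3, h4⟩ := (bb_isBisim τ).2.1 J fJ
          (fun j => r i j / p i) (χ i) (μs i) (νs i) (hbb i hi) (hsrc_row i hi)
        exact ⟨ν', ωs, h1, fun _ => ⟨h2, h3, h4⟩⟩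
    choose ν' ω hw hrest using key
    refine ⟨comboD p ν' hpν.1 hpν.2.1,
      fun j => if h : q j = 0 then ξs j
        else comboD (fun i => r i j / q j) (fun i => ω i j)
          (fun i => div_nonneg (hrnn i j) (hq.1 j))
          (by rw [← Finset.sum_div, hcol j, div_self h]), ?_, ?_, ?_, ?_⟩
    · exact wtau_combo τ hpν (isCombo_comboD _ _ _ _) (fun i _ => hw i)
    · exact ⟨I, fI, p, μs, ν', hpμ, isCombo_comboD _ _ _ _,
        fun i hi => (hrest i hi).1⟩
    · refine ⟨hq.1, hq.2.1, ?_⟩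
      intro x
      have lhs : (comboD p ν' hpν.1 hpν.2.1).f x = ∑ i, ∑ j, r i j * (ω i j).f x := by
        rw [comboD_f]
        apply Finset.sum_congr rfl
        intro i _
        by_cases hi : p i = 0
        · rw [hi, zero_mul]
          symm
          apply Finset.sum_eq_zero
          intro j _
          rw [hrp i hi j, zero_mul]
        · have hcmb := ((hrest i hi).2.1).2.2 x
          rw [hcmb, Finset.mul_sum]
          apply Finset.sum_congr rfl
          intro j _
          field_simp
      rw [lhs, Finset.sum_comm]
      apply Finset.sum_congr rfl
      intro j _
      by_cases hj : q j = 0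
      · rw [hj, zero_mul]
        apply Finset.sum_eq_zero
        intro i _
        rw [hrq j hj i, zero_mul]
      · simp only [dif_neg hj]
        rw [comboD_f, Finset.mul_sum]
        apply Finset.sum_congr rfl
        intro i _
        field_simp
    · intro j
      by_cases hj : q j = 0
      · simp only [dif_pos hj]
        exact Rhat_refl τ (ξs j)
      · simp only [dif_neg hj]
        refine ⟨I, fI, fun i => r i j / q j, fun i => χ i j, fun i => ω i j,
          hsrc_col j hj, isCombo_comboD _ _ _ _, ?_⟩
        intro i hi
        have hrij : r i j ≠ 0 := by
          intro h
          apply hi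
          show r i j / q j = 0
          rw [h, zero_div]
        have hpi : p i ≠ 0 := by
          intro h
          exact hrij (hrp i h j)
        exact (hrest i hpi).2.2 j
  · rintro μ ν α μ' ⟨I, fI, p, μs, νs, hpμ, hpν, hbb⟩ hd
    obtain ⟨μs', hμ'c, hds⟩ := dstep_split hpμ hd
    have key : ∀ i, ∃ (ν'i ν''i : Distr (PE Act)),
        wtau τ (νs i) ν'i ∧
        (p i ≠ 0 → optStep τ ν'i α ν''i ∧ bb τ (μs i) ν'i ∧ bb τ (μs' i) ν''i) := by
      intro i
      by_cases hi : p i = 0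
      · exact ⟨νs i, νs i, Relation.ReflTransGen.refl, fun h => absurd hi h⟩
      · obtain ⟨ν'i, ν''i, h1, h2, h3, h4⟩ := (bb_isBisim τ).2.2 (μs i) (νs i) α (μs' i)
          (hbb i hi) (hds i hi)
        exact ⟨ν'i, ν''i, h1, fun _ => ⟨h2, h3, h4⟩⟩
    choose ν'i ν''i hw hrest using key
    refine ⟨comboD p ν'i hpν.1 hpν.2.1, comboD p (fun i => if p i = 0 then ν'i i else ν''i i)
      hpν.1 hpν.2.1, ?_, ?_, ?_, ?_⟩
    · exact wtau_combo τ hpν (isCombo_comboD _ _ _ _) (fun i _ => hw i)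
    · apply optStep_combo τ (isCombo_comboD _ _ _ _) (isCombo_comboD _ _ _ _)
      intro i hi
      simp only [if_neg hi]
      exact (hrest i hi).1
    · exact ⟨I, fI, p, μs, ν'i, hpμ, isCombo_comboD _ _ _ _, fun i hi => (hrest i hi).2.1⟩
    · refine ⟨I, fI, p, μs', fun i => if p i = 0 then ν'i i else ν''i i, hμ'c,
        isCombo_comboD _ _ _ _, ?_⟩
      intro i hi
      simp only [if_neg hi]
      exact (hrest i hi).2.2

/-- Linearity of branching probabilistic bisimilarity. -/
theorem bb_combo {I : Type} [Fintype I] {p : I → ℝ} {μs νs : I → Distr (PE Act)}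
    {μ ν : Distr (PE Act)} (hμ : IsCombo p μs μ) (hν : IsCombo p νs ν)
    (h : ∀ i, p i ≠ 0 → bb τ (μs i) (νs i)) : bb τ μ ν :=
  ⟨Rhat τ, Rhat_isBisim τ, I, inferInstance, p, μs, νs, hμ, hν, h⟩

/-- Matching a single partial silent step by a branching bisimilar distribution. -/
theorem bb_match_ptau {x y x' : Distr (PE Act)} (h : bb τ x y) (hp : ptau τ x x') :
    ∃ y' y'', wtau τ y y' ∧ ptau τ y' y'' ∧ bb τ x y' ∧ bb τ x' y'' := by
  classical
  rcases hp with hd | ⟨s, x₁, x₂, x₁', hs0, hs1, hm, hm', hd⟩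
  · obtain ⟨y', y'', hw, hopt, hb1, hb2⟩ := (bb_isBisim τ).2.2 x y τ x' h hd
    exact ⟨y', y'', hw, optStep_ptau τ hopt, hb1, hb2⟩
  · set p : Bool → ℝ := fun b => if b then s else 1 - s with hpdef
    have hp0 : ∀ b, 0 ≤ p b := by
      intro b
      cases b <;> simp [hpdef] <;> linarith
    have hp1 : ∑ b, p b = 1 := by
      rw [Fintype.sum_bool]
      simp [hpdef]
    have hcx : IsCombo p (fun b => if b then x₁ else x₂) x := by
      refine ⟨hp0, hp1, ?_⟩
      intro z
      rw [Fintype.sum_bool, hm z]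
      simp [hpdef]
      try ring
    have hcx' : IsCombo p (fun b => if b then x₁' else x₂) x' := by
      refine ⟨hp0, hp1, ?_⟩
      intro z
      rw [Fintype.sum_bool, hm' z]
      simp [hpdef]
      try ring
    obtain ⟨y₀, ys, hw0, hby0, hcombo0, hbys⟩ :=
      (bb_isBisim τ).2.1 Bool inferInstance p (fun b => if b then x₁ else x₂) x y h hcx
    have hbx₁ : bb τ x₁ (ys true) := by
      have := hbys true
      simpa using this
    obtain ⟨y₁', y₁'', hw1, hopt1, hb1, hb1'⟩ := (bb_isBisim τ).2.2 x₁ (ys true) τ x₁' hbx₁ hd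
    refine ⟨comboD p (fun b => if b then y₁' else ys false) hp0 hp1,
      comboD p (fun b => if b then y₁'' else ys false) hp0 hp1, ?_, ?_, ?_, ?_⟩
    · refine Relation.ReflTransGen.trans hw0 ?_
      apply wtau_combo τ hcombo0 (isCombo_comboD _ _ _ _)
      intro b _
      cases b
      · simp
        exact Relation.ReflTransGen.refl
      · simp
        exact hw1
    · apply ptau_combo τ (isCombo_comboD _ _ _ _) (isCombo_comboD _ _ _ _)
      intro b _
      cases b
      · simp
        exact ptau_refl τ _
      · simp
        exact optStep_ptau τ hopt1
    · apply bb_combo τ hcx (isCombo_comboD _ _ _ _)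
      intro b _
      cases b
      · simpa using hbys false
      · simpa using hb1
    · apply bb_combo τ hcx' (isCombo_comboD _ _ _ _)
      intro b _
      cases b
      · simpa using hbys false
      · simpa using hb1'

/-- Matching a weak silent move by a branching bisimilar distribution. -/
theorem bb_match_wtau {x y x' : Distr (PE Act)} (h : bb τ x y) (hw : wtau τ x x') :
    ∃ y', wtau τ y y' ∧ bb τ x' y' := by
  induction hw with
  | refl => exact ⟨y, Relation.ReflTransGen.refl, h⟩
  | tail hab hbc ih =>
      obtain ⟨yb, hwb, hbb⟩ := ih
      obtain ⟨y', y'', hw1, hp1, _, hb2⟩ := bb_match_ptau τ hbb hbc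
      exact ⟨y'', Relation.ReflTransGen.tail (Relation.ReflTransGen.trans hwb hw1) hp1, hb2⟩

/-- Transitivity of branching probabilistic bisimilarity. -/
theorem bb_trans {x z y : Distr (PE Act)} (h1 : bb τ x z) (h2 : bb τ z y) : bb τ x y := by
  refine ⟨fun a c => ∃ b, bb τ a b ∧ bb τ b c, ⟨?_, ?_, ?_⟩, z, h1, h2⟩
  · rintro a c ⟨b, hab, hbc⟩
    exact ⟨b, bb_symm τ hbc, bb_symm τ hab⟩
  · rintro I fI p μs μ ν ⟨b, hμb, hbν⟩ hc
    obtain ⟨b', bs, hwb, hμb', hcb, hbs⟩ := (bb_isBisim τ).2.1 I fI p μs μ b hμb hc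
    obtain ⟨ν₀, hwv0, hb'ν₀⟩ := bb_match_wtau τ hbν hwb
    obtain ⟨ν₁, νs, hwv1, hb'ν₁, hcv, hbsv⟩ := (bb_isBisim τ).2.1 I fI p bs b' ν₀ hb'ν₀ hcb
    exact ⟨ν₁, νs, Relation.ReflTransGen.trans hwv0 hwv1, ⟨b', hμb', hb'ν₁⟩, hcv,
      fun i => ⟨bs i, hbs i, hbsv i⟩⟩
  · rintro μ ν α μ' ⟨b, hμb, hbν⟩ hd
    obtain ⟨b₁, b₂, hwb, hopt, hμb₁, hμ'b₂⟩ := (bb_isBisim τ).2.2 μ b α μ' hμb hd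
    obtain ⟨ν₁, hwv1, hb₁ν₁⟩ := bb_match_wtau τ hbν hwb
    rcases hopt with hdb | ⟨hα, hpb⟩
    · obtain ⟨ν₂, ν₃, hwv2, hopt2, hb₁ν₂, hb₂ν₃⟩ :=
        (bb_isBisim τ).2.2 b₁ ν₁ α b₂ hb₁ν₁ hdb
      exact ⟨ν₂, ν₃, Relation.ReflTransGen.trans hwv1 hwv2, hopt2,
        ⟨b₁, hμb₁, hb₁ν₂⟩, ⟨b₂, hμ'b₂, hb₂ν₃⟩⟩
    · obtain ⟨ν₁', ν₁'', hwv2, hp2, hb₁ν₁', hb₂ν₁''⟩ := bb_match_ptau τ hb₁ν₁ hpb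
      exact ⟨ν₁', ν₁'', Relation.ReflTransGen.trans hwv1 hwv2, Or.inr ⟨hα, hp2⟩,
        ⟨b₁, hμb₁, hb₁ν₁'⟩, ⟨b₂, hμ'b₂, hb₂ν₁''⟩⟩

end Aux3

section Aux4

variable {X : Type}

theorem Distr.f_le_one (μ : Distr X) (x : X) : μ.f x ≤ 1 := by
  have := single_le_finsum x μ.fin μ.nonneg
  rwa [μ.sum_one] at this

theorem finsum_remove_point (μ : Distr X) (E : X) :
    ∑ᶠ x, (if x = E then 0 else μ.f x) = 1 - μ.f E := by
  have hf2 : (Function.support fun x => if x = E then 0 else μ.f x).Finite := by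
    apply μ.fin.subset
    intro x hx
    simp only [Function.mem_support] at hx ⊢
    intro h0; simp [h0] at hx
  have hf1 : (Function.support fun x => if x = E then μ.f x else 0).Finite := by
    apply Set.Finite.subset (Set.finite_singleton E)
    intro x hx
    simp only [Function.mem_support] at hx
    by_contra hxE
    simp only [Set.mem_singleton_iff] at hxE
    simp [hxE] at hx
  have hsplit : ∀ x, μ.f x = (if x = E then μ.f x else 0) + (if x = E then 0 else μ.f x) := by
    intro x; by_cases hx : x = E <;> simp [hx]
  have h1 : (1 : ℝ) = μ.f E + ∑ᶠ x, (if x = E then 0 else μ.f x) := by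
    calc (1 : ℝ) = ∑ᶠ x, μ.f x := μ.sum_one.symm
      _ = (∑ᶠ x, (if x = E then μ.f x else 0)) + ∑ᶠ x, (if x = E then 0 else μ.f x) := by
          rw [← finsum_add_distrib hf1 hf2]
          exact finsum_congr hsplit
      _ = μ.f E + ∑ᶠ x, (if x = E then 0 else μ.f x) := by
          rw [finsum_eq_single _ E (by intro x hx; simp [hx])]
          simp
  linarith

theorem eq_dirac_of_off_zero {μ : Distr X} {E : X} (h : ∀ x, x ≠ E → μ.f x = 0) :
    μ = Distr.dirac E := by
  apply Distr.eq_dirac_of_f_eq_one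
  have : ∑ᶠ x, μ.f x = μ.f E := finsum_eq_single _ E h
  rw [← this, μ.sum_one]

theorem sum_supp_dirac (κ : Distr X) (D : Finset X) (hD : ∀ x, κ.f x ≠ 0 → x ∈ D)
    (x : X) : ∑ i : {y // y ∈ D}, κ.f i.val * (Distr.dirac i.val).f x = κ.f x := by
  classical
  by_cases hx : x ∈ D
  · rw [Fintype.sum_eq_single (⟨x, hx⟩ : {y // y ∈ D})]
    · simp [Distr.dirac_f]
    · intro i hi
      have hix : (i : X) ≠ x := by
        intro h
        apply hi
        exact Subtype.ext h
      simp [Distr.dirac_f, Ne.symm hix]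
  · have hzx : κ.f x = 0 := by
      by_contra h
      exact hx (hD x h)
    rw [hzx]
    apply Finset.sum_eq_zero
    intro i _
    have hix : x ≠ (i : X) := by
      intro h
      exact hx (h ▸ i.2)
    simp [Distr.dirac_f, hix]

theorem sum_supp_f (κ : Distr X) (D : Finset X) (hD : ∀ x, κ.f x ≠ 0 → x ∈ D) :
    ∑ i : {y // y ∈ D}, κ.f i.val = 1 := by
  classical
  rw [Finset.sum_coe_sort D κ.f, ← finsum_eq_finset_sum_of_support_subset κ.f
    (fun x hx => hD x (by simpa using hx)), κ.sum_one]

theorem isCombo_dirac_of_supp (κ : Distr X) (D : Finset X) (hD : ∀ x, κ.f x ≠ 0 → x ∈ D) :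
    IsCombo (fun i : {y // y ∈ D} => κ.f i.val) (fun i => Distr.dirac i.val) κ :=
  ⟨fun i => κ.nonneg _, sum_supp_f κ D hD, fun x => (sum_supp_dirac κ D hD x).symm⟩

theorem mass_eq_subtype_sum (μ : Distr X) (S : Set X) (D : Finset X)
    (hD : ∀ x, μ.f x ≠ 0 → x ∈ D) :
    (∑ᶠ F ∈ S, μ.f F) = ∑ i : {y // y ∈ D}, (if (i : X) ∈ S then μ.f i.val else 0) := by
  classical
  rw [finsum_mem_def]
  have hsupp : Function.support (S.indicator μ.f) ⊆ ↑D := by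
    intro x hx
    simp only [Function.mem_support] at hx
    have : μ.f x ≠ 0 := by
      intro h
      apply hx
      by_cases hxS : x ∈ S
      · rw [Set.indicator_of_mem hxS, h]
      · rw [Set.indicator_of_notMem hxS]
    exact hD x this
  rw [finsum_eq_finset_sum_of_support_subset _ hsupp, ← Finset.sum_coe_sort]
  apply Finset.sum_congr rfl
  intro i _
  rw [Set.indicator_apply]

theorem f_le_mass (μ : Distr X) {S : Set X} {F : X} (hF : F ∈ S) :
    μ.f F ≤ ∑ᶠ x ∈ S, μ.f x := by
  rw [finsum_mem_def]
  have h1 : S.indicator μ.f F = μ.f F := Set.indicator_of_mem hF _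
  rw [← h1]
  apply single_le_finsum F
  · apply μ.fin.subset
    intro x hx
    simp only [Function.mem_support] at hx ⊢
    intro h
    apply hx
    by_cases hxS : x ∈ S
    · rw [Set.indicator_of_mem hxS, h]
    · rw [Set.indicator_of_notMem hxS]
  · intro x
    by_cases hxS : x ∈ S
    · rw [Set.indicator_of_mem hxS]; exact μ.nonneg x
    · rw [Set.indicator_of_notMem hxS]

theorem mass_eq_one_of_supp (κ : Distr X) {S : Set X} (h : ∀ x, κ.f x ≠ 0 → x ∈ S) :
    ∑ᶠ x ∈ S, κ.f x = 1 := by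
  rw [finsum_mem_def]
  have : S.indicator κ.f = κ.f := by
    funext x
    by_cases hx : x ∈ S
    · rw [Set.indicator_of_mem hx]
    · rw [Set.indicator_of_notMem hx]
      by_contra hc
      exact hx (h x fun h0 => hc h0.symm)
  rw [this, κ.sum_one]

theorem mass_eq_zero_of_disjoint (κ : Distr X) {S : Set X} (h : ∀ x ∈ S, κ.f x = 0) :
    ∑ᶠ x ∈ S, κ.f x = 0 := by
  rw [finsum_mem_def]
  apply finsum_eq_zero_of_forall_eq_zero
  intro x
  by_cases hx : x ∈ S
  · rw [Set.indicator_of_mem hx]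
    exact h x hx
  · rw [Set.indicator_of_notMem hx]

theorem mass_nonneg (μ : Distr X) (S : Set X) : 0 ≤ ∑ᶠ x ∈ S, μ.f x := by
  rw [finsum_mem_def]
  apply finsum_nonneg
  intro x
  by_cases hx : x ∈ S
  · rw [Set.indicator_of_mem hx]; exact μ.nonneg x
  · rw [Set.indicator_of_notMem hx]

end Aux4

section Aux5

variable {Act : Type} (τ : Act)

/-- The `≈_b`-equivalence class of a state. -/
def cls (E : PE Act) : Set (PE Act) := {F | bb τ (Distr.dirac E) (Distr.dirac F)}

theorem mem_cls_self (E : PE Act) : E ∈ cls τ E := bb_refl τ _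

theorem cls_eq_of_bb {E F : PE Act} (h : bb τ (Distr.dirac E) (Distr.dirac F)) :
    cls τ E = cls τ F := by
  ext G
  constructor
  · intro hG
    exact bb_trans τ (bb_symm τ h) hG
  · intro hG
    exact bb_trans τ h hG

theorem bb_dirac_combo {E : PE Act} {κ : Distr (PE Act)}
    (h : ∀ F, κ.f F ≠ 0 → bb τ (Distr.dirac E) (Distr.dirac F)) :
    bb τ (Distr.dirac E) κ := by
  classical
  set D := κ.fin.toFinset with hDdef
  have hD : ∀ x, κ.f x ≠ 0 → x ∈ D := by
    intro x hx
    rw [hDdef, Set.Finite.mem_toFinset]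
    exact hx
  have htgt := isCombo_dirac_of_supp κ D hD
  have hsrc : IsCombo (fun i : {y // y ∈ D} => κ.f i.val)
      (fun _ => Distr.dirac E) (Distr.dirac E) := by
    refine ⟨fun i => κ.nonneg _, sum_supp_f κ D hD, ?_⟩
    intro x
    rw [← Finset.sum_mul, sum_supp_f κ D hD, one_mul]
  apply bb_combo τ hsrc htgt
  intro i hi
  exact h i.val hi

/-- Dirac distributions of states in the support of a stable distribution are stable. -/
theorem dirac_stable {μ : Distr (PE Act)} (hs : Stable τ μ) {E : PE Act} (hE : μ.f E ≠ 0) :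
    Stable τ (Distr.dirac E) := by
  classical
  intro ξ hw hb
  by_cases hc1 : μ.f E = 1
  · have hμE : μ = Distr.dirac E := Distr.eq_dirac_of_f_eq_one hc1
    rw [← hμE] at hw hb ⊢
    exact hs ξ hw hb
  · have hclt : μ.f E < 1 := lt_of_le_of_ne (Distr.f_le_one μ E) hc1
    have hc0 : 0 < μ.f E := lt_of_le_of_ne (μ.nonneg E) (Ne.symm hE)
    have h1c : (0 : ℝ) < 1 - μ.f E := by linarith
    set ρ : Distr (PE Act) := ⟨fun x => if x = E then 0 else μ.f x / (1 - μ.f E),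
      fun x => by
        by_cases hx : x = E
        · simp [hx]
        · simp only [hx, if_neg, if_false]
          exact div_nonneg (μ.nonneg x) h1c.le,
      by
        apply μ.fin.subset
        intro x hx
        simp only [Function.mem_support] at hx ⊢
        intro h0
        apply hx
        simp [h0],
      by
        have hcongr : ∀ x, (if x = E then 0 else μ.f x / (1 - μ.f E))
            = (if x = E then 0 else μ.f x) * (1 - μ.f E)⁻¹ := by
          intro x
          by_cases hx : x = E <;> simp [hx] <;> ring
        rw [finsum_congr hcongr, ← finsum_mul _ _, finsum_remove_point μ E]
        field_simp⟩ with hρdef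
    set p : Bool → ℝ := fun b => if b then μ.f E else 1 - μ.f E with hpdef
    have hp0 : ∀ b, 0 ≤ p b := by
      intro b
      cases b <;> simp [hpdef] <;> linarith
    have hp1 : ∑ b, p b = 1 := by
      rw [Fintype.sum_bool]
      simp [hpdef]
    have hcomb : IsCombo p (fun b => if b then Distr.dirac E else ρ) μ := by
      refine ⟨hp0, hp1, ?_⟩
      intro x
      rw [Fintype.sum_bool]
      simp only [hpdef, if_pos, if_neg, Bool.false_eq_true, if_false, if_true]
      by_cases hx : x = E
      · subst hx
        simp [hρdef, Distr.dirac_f]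
      · simp only [hρdef, Distr.dirac_f, hx, if_neg, if_false]
        field_simp
        ring
    have hwμ : wtau τ μ (comboD p (fun b => if b then ξ else ρ) hp0 hp1) := by
      apply wtau_combo τ hcomb (isCombo_comboD _ _ _ _)
      intro b _
      cases b
      · simp
        exact Relation.ReflTransGen.refl
      · simp
        exact hw
    have hbμ : bb τ μ (comboD p (fun b => if b then ξ else ρ) hp0 hp1) := by
      apply bb_combo τ hcomb (isCombo_comboD _ _ _ _)
      intro b _
      cases b
      · simp
        exact bb_refl τ ρ
      · simp
        exact hb
    have heq := hs _ hwμ hbμ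
    have hptE : μ.f E = μ.f E * ξ.f E := by
      conv_lhs => rw [← heq]
      rw [comboD_f, Fintype.sum_bool]
      have hρE : ρ.f E = 0 := by simp [hρdef]
      simp [hpdef, hρE]
    have hξE : ξ.f E = 1 := by
      have h' : μ.f E * 1 = μ.f E * ξ.f E := by
        rw [mul_one]
        exact hptE
      exact (mul_left_cancel₀ hE h').symm
    exact Distr.eq_dirac_of_f_eq_one hξE

/-- A distribution bisimilar to a stable Dirac distribution is supported in its class. -/
theorem supp_subset_cls {E : PE Act} {κ : Distr (PE Act)}
    (hstE : Stable τ (Distr.dirac E)) (h : bb τ (Distr.dirac E) κ) :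
    ∀ F, κ.f F ≠ 0 → bb τ (Distr.dirac E) (Distr.dirac F) := by
  classical
  intro F hF
  set D := κ.fin.toFinset with hDdef
  have hD : ∀ x, κ.f x ≠ 0 → x ∈ D := by
    intro x hx
    rw [hDdef, Set.Finite.mem_toFinset]
    exact hx
  have hcombo := isCombo_dirac_of_supp κ D hD
  obtain ⟨ξ, ξs, hwξ, hbκξ, hcξ, hbs⟩ := (bb_isBisim τ).2.1 {y // y ∈ D} inferInstance
    (fun i => κ.f i.val) (fun i => Distr.dirac i.val) κ (Distr.dirac E)
    (bb_symm τ h) hcombo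
  have hbEξ : bb τ (Distr.dirac E) ξ := bb_trans τ h hbκξ
  have hξE : ξ = Distr.dirac E := hstE ξ hwξ hbEξ
  rw [hξE] at hcξ
  set i₀ : {y // y ∈ D} := ⟨F, hD F hF⟩ with hi₀
  have hξs : ξs i₀ = Distr.dirac E := by
    apply eq_dirac_of_off_zero
    intro x hx
    have hpt := hcξ.2.2 x
    have hdx : (Distr.dirac E).f x = 0 := by
      simp [Distr.dirac_f, hx]
    rw [hdx] at hpt
    have hterm := (Finset.sum_eq_zero_iff_of_nonneg
      (fun i _ => mul_nonneg (κ.nonneg i.val) ((ξs i).nonneg x))).1 hpt.symm i₀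
      (Finset.mem_univ i₀)
    have : κ.f F * (ξs i₀).f x = 0 := hterm
    rcases mul_eq_zero.1 this with h0 | h0
    · exact absurd h0 hF
    · exact h0
  have := hbs i₀
  rw [hξs] at this
  exact bb_symm τ this

/-- Forward direction: bisimilar stable distributions have the same class masses. -/
theorem forward_dir {μ ν : Distr (PE Act)} (hμ : Stable τ μ) (hν : Stable τ ν)
    (h : bb τ μ ν) (E₀ : PE Act) :
    (∑ᶠ F ∈ cls τ E₀, μ.f F) = ∑ᶠ F ∈ cls τ E₀, ν.f F := by
  classical
  set Dμ := μ.fin.toFinset with hDdef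
  have hD : ∀ x, μ.f x ≠ 0 → x ∈ Dμ := by
    intro x hx
    rw [hDdef, Set.Finite.mem_toFinset]
    exact hx
  have hcombo := isCombo_dirac_of_supp μ Dμ hD
  obtain ⟨ν', νs, hwν, hbμν', hcν, hbs⟩ := (bb_isBisim τ).2.1 {y // y ∈ Dμ} inferInstance
    (fun i => μ.f i.val) (fun i => Distr.dirac i.val) μ ν h hcombo
  have hbνν' : bb τ ν ν' := bb_trans τ (bb_symm τ h) hbμν'
  have hν'ν : ν' = ν := hν ν' hwν hbνν'
  rw [hν'ν] at hcν
  have hfi : ∀ i : {y // y ∈ Dμ}, μ.f i.val ≠ 0 := by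
    intro i
    have h2 : i.val ∈ Function.support μ.f := (Set.Finite.mem_toFinset μ.fin).1 i.2
    exact h2
  have hsupp_i : ∀ (i : {y // y ∈ Dμ}) F, (νs i).f F ≠ 0 →
      bb τ (Distr.dirac i.val) (Distr.dirac F) := by
    intro i
    exact supp_subset_cls τ (dirac_stable τ hμ (hfi i)) (hbs i)
  -- mass of ν over the class
  have hmass : (∑ᶠ F ∈ cls τ E₀, ν.f F)
      = ∑ i : {y // y ∈ Dμ}, μ.f i.val * (∑ᶠ F ∈ cls τ E₀, (νs i).f F) := by
    rw [finsum_mem_def]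
    have hpt : ∀ F, (cls τ E₀).indicator ν.f F
        = ∑ i : {y // y ∈ Dμ}, μ.f i.val * (cls τ E₀).indicator (νs i).f F := by
      intro F
      by_cases hF : F ∈ cls τ E₀
      · rw [Set.indicator_of_mem hF, hcν.2.2 F]
        apply Finset.sum_congr rfl
        intro i _
        rw [Set.indicator_of_mem hF]
      · rw [Set.indicator_of_notMem hF]
        symm
        apply Finset.sum_eq_zero
        intro i _
        rw [Set.indicator_of_notMem hF, mul_zero]
    rw [finsum_congr hpt, finsum_sum_comm]
    · apply Finset.sum_congr rfl
      intro i _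
      rw [finsum_mem_def, ← mul_finsum]
    · intro i _
      apply (νs i).fin.subset
      intro x hx
      simp only [Function.mem_support] at hx ⊢
      intro h0
      apply hx
      have : (cls τ E₀).indicator (νs i).f x = 0 := by
        by_cases hxS : x ∈ cls τ E₀
        · rw [Set.indicator_of_mem hxS, h0]
        · rw [Set.indicator_of_notMem hxS]
      rw [this, mul_zero]
  have hclassmass : ∀ i : {y // y ∈ Dμ},
      (∑ᶠ F ∈ cls τ E₀, (νs i).f F) = if i.val ∈ cls τ E₀ then 1 else 0 := by
    intro i
    by_cases hi : i.val ∈ cls τ E₀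
    · rw [if_pos hi]
      apply mass_eq_one_of_supp
      intro F hF
      exact bb_trans τ hi (hsupp_i i F hF)
    · rw [if_neg hi]
      apply mass_eq_zero_of_disjoint
      intro F hF
      by_contra hc
      apply hi
      exact bb_trans τ hF (bb_symm τ (hsupp_i i F fun h0 => hc h0))
  rw [hmass, mass_eq_subtype_sum μ (cls τ E₀) Dμ hD]
  apply Finset.sum_congr rfl
  intro i _
  rw [hclassmass i]
  by_cases hi : i.val ∈ cls τ E₀ <;> simp [hi]

/-- The class-transport kernel for distributions with equal class masses. -/
theorem ker_exists {x y : Distr (PE Act)}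
    (hΘ : ∀ E, (∑ᶠ F ∈ cls τ E, x.f F) = ∑ᶠ F ∈ cls τ E, y.f F) :
    ∃ ker : PE Act → Distr (PE Act),
      (∀ E, x.f E ≠ 0 → ∀ F, (ker E).f F ≠ 0 → F ∈ cls τ E) ∧
      (∀ E, x.f E ≠ 0 → ∀ F, (ker E).f F ≠ 0 → y.f F ≠ 0) ∧
      (∀ E, x.f E ≠ 0 → bb τ (Distr.dirac E) (ker E)) ∧
      (∀ z, ∑ i : {e // e ∈ x.fin.toFinset}, x.f i.val * (ker i.val).f z = y.f z) := by
  classical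
  have hindfin : ∀ E : PE Act, (Function.support ((cls τ E).indicator y.f)).Finite := by
    intro E
    apply y.fin.subset
    intro F hF
    simp only [Function.mem_support] at hF ⊢
    intro h0
    apply hF
    by_cases hFS : F ∈ cls τ E
    · rw [Set.indicator_of_mem hFS, h0]
    · rw [Set.indicator_of_notMem hFS]
  have hmk : ∀ E, ∃ k : Distr (PE Act), (∑ᶠ F ∈ cls τ E, y.f F) ≠ 0 →
      ∀ F, k.f F = if F ∈ cls τ E then y.f F / (∑ᶠ G ∈ cls τ E, y.f G) else 0 := by
    intro E
    by_cases hm : (∑ᶠ F ∈ cls τ E, y.f F) = 0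
    · exact ⟨Distr.dirac E, fun h => absurd hm h⟩
    · refine ⟨⟨fun F => if F ∈ cls τ E then y.f F / (∑ᶠ G ∈ cls τ E, y.f G) else 0,
        ?_, ?_, ?_⟩, fun _ F => rfl⟩
      · intro F
        by_cases hF : F ∈ cls τ E
        · simp only [if_pos hF]
          exact div_nonneg (y.nonneg F) (mass_nonneg y _)
        · simp only [if_neg hF]
          exact le_refl 0
      · apply y.fin.subset
        intro F hF
        simp only [Function.mem_support] at hF ⊢
        intro h0
        apply hF
        by_cases hFS : F ∈ cls τ E
        · simp only [if_pos hFS, h0, zero_div]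
        · simp only [if_neg hFS]
      · have hcongr : ∀ F, (if F ∈ cls τ E then y.f F / (∑ᶠ G ∈ cls τ E, y.f G) else 0)
            = (cls τ E).indicator y.f F * (∑ᶠ G ∈ cls τ E, y.f G)⁻¹ := by
          intro F
          by_cases hF : F ∈ cls τ E
          · rw [if_pos hF, Set.indicator_of_mem hF, div_eq_mul_inv]
          · rw [if_neg hF, Set.indicator_of_notMem hF, zero_mul]
        rw [finsum_congr hcongr, ← finsum_mul _ _, ← finsum_mem_def]
        field_simp
  choose ker hker using hmk
  have hMpos : ∀ E, x.f E ≠ 0 → (∑ᶠ F ∈ cls τ E, y.f F) ≠ 0 := by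
    intro E hE
    rw [← hΘ E]
    have h1 := f_le_mass x (mem_cls_self τ E)
    have h2 : 0 < x.f E := lt_of_le_of_ne (x.nonneg E) (Ne.symm hE)
    intro h0
    rw [h0] at h1
    linarith
  refine ⟨ker, ?_, ?_, ?_, ?_⟩
  · intro E hE F hF
    rw [hker E (hMpos E hE) F] at hF
    by_contra hc
    rw [if_neg hc] at hF
    exact hF rfl
  · intro E hE F hF
    rw [hker E (hMpos E hE) F] at hF
    by_cases hc : F ∈ cls τ E
    · rw [if_pos hc] at hF
      intro h0
      rw [h0, zero_div] at hF
      exact hF rfl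
    · rw [if_neg hc] at hF
      exact absurd rfl hF
  · intro E hE
    apply bb_dirac_combo τ
    intro F hF
    rw [hker E (hMpos E hE) F] at hF
    by_cases hc : F ∈ cls τ E
    · exact hc
    · rw [if_neg hc] at hF
      exact absurd rfl hF
  · intro z
    have hterm : ∀ i : {e // e ∈ x.fin.toFinset},
        x.f i.val * (ker i.val).f z
          = (if (i : PE Act) ∈ cls τ z then x.f i.val else 0)
            * (y.f z / (∑ᶠ F ∈ cls τ z, y.f F)) := by
      intro i
      have hxi : x.f i.val ≠ 0 := (Set.Finite.mem_toFinset x.fin).1 i.2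
      rw [hker i.val (hMpos i.val hxi) z]
      by_cases hzc : z ∈ cls τ i.val
      · have hic : (i : PE Act) ∈ cls τ z := bb_symm τ hzc
        have hceq : cls τ i.val = cls τ z := cls_eq_of_bb τ hzc
        rw [if_pos hzc, if_pos hic, hceq]
      · have hic : (i : PE Act) ∉ cls τ z := by
          intro hc
          exact hzc (bb_symm τ hc)
        rw [if_neg hzc, if_neg hic, mul_zero, zero_mul]
    rw [Finset.sum_congr rfl (fun i _ => hterm i), ← Finset.sum_mul]
    have hmx : ∑ i : {e // e ∈ x.fin.toFinset},
        (if (i : PE Act) ∈ cls τ z then x.f i.val else 0) = ∑ᶠ F ∈ cls τ z, x.f F := by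
      rw [mass_eq_subtype_sum x (cls τ z) x.fin.toFinset
        (fun F hF => (Set.Finite.mem_toFinset x.fin).2 hF)]
    rw [hmx, hΘ z]
    by_cases hM : (∑ᶠ F ∈ cls τ z, y.f F) = 0
    · have hyz : y.f z = 0 := by
        have h1 := f_le_mass y (mem_cls_self τ z)
        rw [hM] at h1
        exact le_antisymm h1 (y.nonneg z)
      rw [hM, hyz]
      simp
    · rw [mul_comm, div_mul_cancel₀ _ hM]

/-- Decomposability for pairs with equal class masses. -/
theorem theta_decompose {x y : Distr (PE Act)}
    (hΘ : ∀ E, (∑ᶠ F ∈ cls τ E, x.f F) = ∑ᶠ F ∈ cls τ E, y.f F)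
    {I : Type} [Fintype I] {p : I → ℝ} {μs : I → Distr (PE Act)}
    (hc : IsCombo p μs x) :
    ∃ νs : I → Distr (PE Act), IsCombo p νs y ∧ ∀ i, bb τ (μs i) (νs i) := by
  classical
  obtain ⟨ker, hk1, hk2, hk3, hk4⟩ := ker_exists τ hΘ
  set Dx := x.fin.toFinset with hDxdef
  have hDx : ∀ z, x.f z ≠ 0 → z ∈ Dx := fun z hz => (Set.Finite.mem_toFinset x.fin).2 hz
  have hzero : ∀ i, p i ≠ 0 → ∀ z, x.f z = 0 → (μs i).f z = 0 := by
    intro i hi z hz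
    have h1 := hc.term_le i z
    rw [hz] at h1
    have h2 : 0 < p i := lt_of_le_of_ne (hc.1 i) (Ne.symm hi)
    nlinarith [(μs i).nonneg z]
  have hsupp : ∀ i, p i ≠ 0 → ∀ z, (μs i).f z ≠ 0 → z ∈ Dx := by
    intro i hi z hz
    apply hDx
    intro h0
    exact hz (hzero i hi z h0)
  have hsubsum : ∀ i, p i ≠ 0 → ∑ e : {e // e ∈ Dx}, (μs i).f e.val = 1 :=
    fun i hi => sum_supp_f (μs i) Dx (hsupp i hi)
  refine ⟨fun i => if h : p i = 0 then μs i
    else comboD (fun e : {e // e ∈ Dx} => (μs i).f e.val) (fun e => ker e.val)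
      (fun e => (μs i).nonneg _) (hsubsum i h), ⟨hc.1, hc.2.1, ?_⟩, ?_⟩
  · intro z
    have hstep : ∀ i, p i * (if h : p i = 0 then μs i
        else comboD (fun e : {e // e ∈ Dx} => (μs i).f e.val) (fun e => ker e.val)
          (fun e => (μs i).nonneg _) (hsubsum i h)).f z
        = ∑ e : {e // e ∈ Dx}, p i * (μs i).f e.val * (ker e.val).f z := by
      intro i
      by_cases hi : p i = 0
      · simp only [hi, dif_pos, zero_mul]
        symm
        apply Finset.sum_eq_zero
        intro e _
        simp [hi]
      · simp only [dif_neg hi]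
        rw [comboD_f, Finset.mul_sum]
        apply Finset.sum_congr rfl
        intro e _
        ring
    rw [Finset.sum_congr rfl (fun i _ => hstep i), Finset.sum_comm]
    have hcol : ∀ e : {e // e ∈ Dx},
        ∑ i, p i * (μs i).f e.val * (ker e.val).f z = x.f e.val * (ker e.val).f z := by
      intro e
      rw [← Finset.sum_mul]
      congr 1
      exact (hc.2.2 e.val).symm
    rw [Finset.sum_congr rfl (fun e _ => hcol e), hk4 z]
  · intro i
    by_cases hi : p i = 0
    · simp only [dif_pos hi]
      exact bb_refl τ (μs i)
    · simp only [dif_neg hi]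
      apply bb_combo τ (isCombo_dirac_of_supp (μs i) Dx (hsupp i hi))
        (isCombo_comboD _ _ _ _)
      intro e he
      have hxe : x.f e.val ≠ 0 := (Set.Finite.mem_toFinset x.fin).1 e.2
      exact hk3 e.val hxe

/-- Transfer for pairs with equal class masses when the target is stable. -/
theorem theta_transfer {x y : Distr (PE Act)}
    (hΘ : ∀ E, (∑ᶠ F ∈ cls τ E, x.f F) = ∑ᶠ F ∈ cls τ E, y.f F)
    (hsty : Stable τ y) {α : Act} {x' : Distr (PE Act)} (hd : dstep x α x') :
    ∃ y'', optStep τ y α y'' ∧ bb τ x' y'' := by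
  classical
  obtain ⟨ker, hk1, hk2, hk3, hk4⟩ := ker_exists τ hΘ
  set Dx := x.fin.toFinset with hDxdef
  set Dy := y.fin.toFinset with hDydef
  have hDx : ∀ z, x.f z ≠ 0 → z ∈ Dx := fun z hz => (Set.Finite.mem_toFinset x.fin).2 hz
  have hDy : ∀ z, y.f z ≠ 0 → z ∈ Dy := fun z hz => (Set.Finite.mem_toFinset y.fin).2 hz
  have hxe : ∀ e : {e // e ∈ Dx}, x.f e.val ≠ 0 :=
    fun e => (Set.Finite.mem_toFinset x.fin).1 e.2
  obtain ⟨ρ, hρc, hρd⟩ := dstep_split (isCombo_dirac_of_supp x Dx hDx) hd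
  set w : ({e // e ∈ Dx} × {f // f ∈ Dy}) → ℝ :=
    fun k => x.f k.1.val * (ker k.1.val).f k.2.val with hwdef
  have hw0 : ∀ k, 0 ≤ w k := fun k => mul_nonneg (x.nonneg _) ((ker _).nonneg _)
  have hkerDy : ∀ e : {e // e ∈ Dx}, ∀ z, (ker e.val).f z ≠ 0 → z ∈ Dy :=
    fun e z hz => hDy z (hk2 e.val (hxe e) z hz)
  have hinner1 : ∀ e : {e // e ∈ Dx}, ∑ f : {f // f ∈ Dy}, (ker e.val).f f.val = 1 :=
    fun e => sum_supp_f (ker e.val) Dy (hkerDy e)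
  have hwsum : ∑ k, w k = 1 := by
    rw [Fintype.sum_prod_type]
    have : ∀ e : {e // e ∈ Dx}, ∑ f : {f // f ∈ Dy}, w (e, f) = x.f e.val := by
      intro e
      rw [show (fun f : {f // f ∈ Dy} => w (e, f))
        = fun f => x.f e.val * (ker e.val).f f.val from rfl, ← Finset.mul_sum,
        hinner1 e, mul_one]
    rw [Finset.sum_congr rfl (fun e _ => this e)]
    exact sum_supp_f x Dx hDx
  have hcy : IsCombo w (fun k => Distr.dirac k.2.val) y := by
    refine ⟨hw0, hwsum, ?_⟩
    intro z
    rw [Fintype.sum_prod_type]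
    have hinner : ∀ e : {e // e ∈ Dx},
        ∑ f : {f // f ∈ Dy}, w (e, f) * (Distr.dirac f.val).f z
          = x.f e.val * (ker e.val).f z := by
      intro e
      have h1 : ∀ f : {f // f ∈ Dy}, w (e, f) * (Distr.dirac f.val).f z
          = x.f e.val * ((ker e.val).f f.val * (Distr.dirac f.val).f z) := by
        intro f
        show x.f e.val * (ker e.val).f f.val * (Distr.dirac f.val).f z
          = x.f e.val * ((ker e.val).f f.val * (Distr.dirac f.val).f z)
        ring
      rw [Finset.sum_congr rfl (fun f _ => h1 f), ← Finset.mul_sum,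
        sum_supp_dirac (ker e.val) Dy (hkerDy e) z]
    rw [Finset.sum_congr rfl (fun e _ => hinner e), hk4 z]
  have hcx' : IsCombo w (fun k => ρ k.1) x' := by
    refine ⟨hw0, hwsum, ?_⟩
    intro z
    rw [Fintype.sum_prod_type]
    have hinner : ∀ e : {e // e ∈ Dx},
        ∑ f : {f // f ∈ Dy}, w (e, f) * (ρ e).f z = x.f e.val * (ρ e).f z := by
      intro e
      have h1 : ∀ f : {f // f ∈ Dy}, w (e, f) * (ρ e).f z
          = (x.f e.val * (ρ e).f z) * (ker e.val).f f.val := by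
        intro f
        show x.f e.val * (ker e.val).f f.val * (ρ e).f z
          = (x.f e.val * (ρ e).f z) * (ker e.val).f f.val
        ring
      rw [Finset.sum_congr rfl (fun f _ => h1 f), ← Finset.mul_sum, hinner1 e, mul_one]
    rw [Finset.sum_congr rfl (fun e _ => hinner e)]
    exact hρc.2.2 z
  have key : ∀ k : {e // e ∈ Dx} × {f // f ∈ Dy}, ∃ κ σ : Distr (PE Act),
      wtau τ (Distr.dirac k.2.val) κ ∧
      (w k ≠ 0 → optStep τ κ α σ ∧ bb τ (Distr.dirac k.1.val) κ ∧ bb τ (ρ k.1) σ ∧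
        bb τ (Distr.dirac k.1.val) (Distr.dirac k.2.val)) := by
    intro k
    by_cases hk : w k = 0
    · exact ⟨Distr.dirac k.2.val, Distr.dirac k.2.val, Relation.ReflTransGen.refl,
        fun h => absurd hk h⟩
    · have hker0 : (ker k.1.val).f k.2.val ≠ 0 := by
        intro h0
        apply hk
        exact mul_eq_zero_of_right _ h0
      have hbbEF : bb τ (Distr.dirac k.1.val) (Distr.dirac k.2.val) :=
        hk1 k.1.val (hxe k.1) k.2.val hker0
      obtain ⟨κ, σ, h1, h2, h3, h4⟩ := (bb_isBisim τ).2.2 (Distr.dirac k.1.val)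
        (Distr.dirac k.2.val) α (ρ k.1) hbbEF (hρd k.1 (hxe k.1))
      exact ⟨κ, σ, h1, fun _ => ⟨h2, h3, h4, hbbEF⟩⟩
  choose κ σ hκw hrest using key
  have hwt : wtau τ y (comboD w κ hw0 hwsum) :=
    wtau_combo τ hcy (isCombo_comboD _ _ _ _) (fun k _ => hκw k)
  have hbb1 : bb τ y (comboD w κ hw0 hwsum) := by
    apply bb_combo τ hcy (isCombo_comboD _ _ _ _)
    intro k hk
    exact bb_trans τ (bb_symm τ (hrest k hk).2.2.2) (hrest k hk).2.1
  have heq : comboD w κ hw0 hwsum = y := hsty _ hwt hbb1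
  have hcyκ : IsCombo w κ y := heq ▸ isCombo_comboD w κ hw0 hwsum
  refine ⟨comboD w σ hw0 hwsum, ?_, ?_⟩
  · exact optStep_combo τ hcyκ (isCombo_comboD _ _ _ _) (fun k hk => (hrest k hk).1)
  · exact bb_combo τ hcx' (isCombo_comboD _ _ _ _) (fun k hk => (hrest k hk).2.2.1)

/-- Backward direction: stable distributions with equal class masses are bisimilar. -/
theorem backward_dir {μ ν : Distr (PE Act)} (hμ : Stable τ μ) (hν : Stable τ ν)
    (h : ∀ E, (∑ᶠ F ∈ cls τ E, μ.f F) = ∑ᶠ F ∈ cls τ E, ν.f F) : bb τ μ ν := by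
  refine ⟨fun a b => bb τ a b ∨
    ((∀ E, (∑ᶠ F ∈ cls τ E, a.f F) = ∑ᶠ F ∈ cls τ E, b.f F) ∧ Stable τ a ∧ Stable τ b),
    ⟨?_, ?_, ?_⟩, Or.inr ⟨h, hμ, hν⟩⟩
  · rintro a b (hab | ⟨hΘ, ha, hb⟩)
    · exact Or.inl (bb_symm τ hab)
    · exact Or.inr ⟨fun E => (hΘ E).symm, hb, ha⟩
  · rintro I fI p μs a b (hab | ⟨hΘ, ha, hb⟩) hc
    · obtain ⟨ν', νs, h1, h2, h3, h4⟩ := (bb_isBisim τ).2.1 I fI p μs a b hab hc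
      exact ⟨ν', νs, h1, Or.inl h2, h3, fun i => Or.inl (h4 i)⟩
    · obtain ⟨νs, h1, h2⟩ := theta_decompose τ hΘ hc
      exact ⟨b, νs, Relation.ReflTransGen.refl, Or.inr ⟨hΘ, ha, hb⟩, h1,
        fun i => Or.inl (h2 i)⟩
  · rintro a b α a' (hab | ⟨hΘ, ha, hb⟩) hd
    · obtain ⟨ν', ν'', h1, h2, h3, h4⟩ := (bb_isBisim τ).2.2 a b α a' hab hd
      exact ⟨ν', ν'', h1, h2, Or.inl h3, Or.inl h4⟩
    · obtain ⟨y'', h1, h2⟩ := theta_transfer τ hΘ hb hd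
      exact ⟨b, y'', Relation.ReflTransGen.refl, h1, Or.inr ⟨hΘ, ha, hb⟩, Or.inl h2⟩

end Aux5

/-- For `≈_b`-stable distributions, branching probabilistic bisimilarity holds iff
the distributions assign the same probability to each `≈_b`-equivalence class of states. -/
theorem statement4 {Act : Type} (τ : Act) {μ ν : Distr (PE Act)}
    (hμ : Stable τ μ) (hν : Stable τ ν) :
    bb τ μ ν ↔ ∀ E : PE Act,
      (∑ᶠ F ∈ {F | bb τ (Distr.dirac E) (Distr.dirac F)}, μ.f F) =
      (∑ᶠ F ∈ {F | bb τ (Distr.dirac E) (Distr.dirac F)}, ν.f F) := by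
  constructor
  · intro hbb E
    exact forward_dir τ hμ hν hbb E
  · intro h
    exact backward_dir τ hμ hν h

end PBB
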